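/- arXiv:2304.14250 — 2 statements merged into one kernel-verified Lean document; each statement's English description precedes it below -/
import Mathlib

section
/- Fix 1 < p < ∞ with p′ = p/(p−1), let w be a discrete weight in the discrete Muckenhoupt class A_p, and suppose the dual operator M′h := M(w·h)/w is bounded on ℓ_{p′}(w) with operator norm ‖M′‖_{ℓ_{p′}(w)} > 0. For any nonnegative sequence h ∈ ℓ_{p′}(w), not identically zero, the sequence N′h(n) := ∑_{s=0}^{∞} (M′)^s h(n) / (2^s ‖M′‖_{ℓ_{p′}(w)}^s) satisfies: (a) h(n) ≤ N′h(n) for all n ≥ 1; (b) ‖N′h‖_{ℓ_{p′}(w)} ≤ 2‖h‖_{ℓ_{p′}(w)}; (c) the weight (N′h)·w belongs to the class A_1 with [(N′h)·w]_{A_1} ≤ 2‖M′‖_{ℓ_{p′}(w)}. -/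
open Finset Real Filter Topology

noncomputable section

/-- Average of a sequence over the interval `[a, b]` of positive integers. -/
def intervalAvg (f : ℕ → ℝ) (a b : ℕ) : ℝ :=
  ((Finset.Icc a b).card : ℝ)⁻¹ * ∑ k ∈ Finset.Icc a b, f k

/-- Discrete Hardy–Littlewood maximal operator: the supremum of the averages of `f`
over all intervals `[a, b] ⊆ [1, ∞)` of positive integers containing `n`. -/
def maxOp (f : ℕ → ℝ) : ℕ → ℝ := fun n =>
  sSup {x : ℝ | ∃ a b : ℕ, 1 ≤ a ∧ a ≤ n ∧ n ≤ b ∧ x = intervalAvg f a b}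

/-- The `A_p` quotient of a weight `w` at scale `n`. -/
def apQuot (p : ℝ) (w : ℕ → ℝ) (n : ℕ) : ℝ :=
  ((n : ℝ)⁻¹ * ∑ k ∈ Finset.Icc 1 n, w k) *
    ((n : ℝ)⁻¹ * ∑ k ∈ Finset.Icc 1 n, w k ^ (-1 / (p - 1))) ^ (p - 1)

/-- Membership in the discrete Muckenhoupt class `A_p` (`1 < p < ∞`): the `A_p`
quotients are bounded over all scales `n ≥ 1`. -/
def MemAp (p : ℝ) (w : ℕ → ℝ) : Prop :=
  BddAbove {x : ℝ | ∃ n : ℕ, 1 ≤ n ∧ x = apQuot p w n}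

/-- The `A_p` norm `[w]_{A_p}`: the supremum of the `A_p` quotients over `n ≥ 1`. -/
def apNorm (p : ℝ) (w : ℕ → ℝ) : ℝ :=
  sSup {x : ℝ | ∃ n : ℕ, 1 ≤ n ∧ x = apQuot p w n}

/-- `C` is an `A₁` constant for `w`: `Mw(n) ≤ C · w(n)` for all `n ≥ 1`, i.e. every
interval average of `w` over an interval containing `n` is at most `C · w(n)`. -/
def IsA1Bound (w : ℕ → ℝ) (C : ℝ) : Prop :=
  ∀ a b n : ℕ, 1 ≤ a → a ≤ n → n ≤ b → intervalAvg w a b ≤ C * w n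

/-- Membership in the discrete Muckenhoupt class `A₁`. -/
def MemA1 (w : ℕ → ℝ) : Prop := ∃ C : ℝ, IsA1Bound w C

/-- The `A₁` norm `[w]_{A₁}`: the least `A₁` constant of `w`. -/
def a1Norm (w : ℕ → ℝ) : ℝ := sInf {C : ℝ | IsA1Bound w C}

/-- The weighted norm `‖f‖_{ℓ_r(w)} = (∑_{k=1}^∞ w(k) |f(k)|^r)^{1/r}`. -/
def lpNormW (r : ℝ) (w f : ℕ → ℝ) : ℝ :=
  (∑' k : ℕ, w (k + 1) * |f (k + 1)| ^ r) ^ (1 / r)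

/-- `f ∈ ℓ_r(w)`: the series `∑_{k=1}^∞ w(k)|f(k)|^r` converges, i.e.
`‖f‖_{ℓ_r(w)} < ∞`. -/
def MemLp (r : ℝ) (w f : ℕ → ℝ) : Prop :=
  Summable fun k : ℕ => w (k + 1) * |f (k + 1)| ^ r

/-- `C` is a bound for the maximal operator `M` on `ℓ_r(w)` over nonnegative
sequences. -/
def IsMaxBound (r : ℝ) (w : ℕ → ℝ) (C : ℝ) : Prop :=
  ∀ f : ℕ → ℝ, (∀ k, 0 ≤ f k) → MemLp r w f →
    lpNormW r w (maxOp f) ≤ C * lpNormW r w f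

/-- The operator norm `‖M‖_{ℓ_r(w)}`: the least nonnegative bound for `M` on
`ℓ_r(w)`. -/
def maxOpNorm (r : ℝ) (w : ℕ → ℝ) : ℝ := sInf {C : ℝ | 0 ≤ C ∧ IsMaxBound r w C}

/-- The dual maximal operator `M'h = M(w·h)/w`. -/
def dualOp (w h : ℕ → ℝ) : ℕ → ℝ := fun n => maxOp (fun k => w k * h k) n / w n

/-- `C` is a bound for the dual maximal operator `M'` on `ℓ_r(w)` over nonnegative
sequences. -/
def IsDualBound (r : ℝ) (w : ℕ → ℝ) (C : ℝ) : Prop :=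
  ∀ h : ℕ → ℝ, (∀ k, 0 ≤ h k) → MemLp r w h →
    lpNormW r w (dualOp w h) ≤ C * lpNormW r w h

/-- The operator norm `‖M'‖_{ℓ_r(w)}`. -/
def dualOpNorm (r : ℝ) (w : ℕ → ℝ) : ℝ := sInf {C : ℝ | 0 ≤ C ∧ IsDualBound r w C}

/-- The Rubio de Francia algorithm
`Nh(n) = ∑_{s=0}^∞ M^s h(n) / (2^s ‖M‖_{ℓ_p(w)}^s)`. -/
def rdfN (p : ℝ) (w h : ℕ → ℝ) : ℕ → ℝ := fun n =>
  ∑' s : ℕ, maxOp^[s] h n / (2 ^ s * maxOpNorm p w ^ s)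

/-- The dual Rubio de Francia algorithm
`N'h(n) = ∑_{s=0}^∞ (M')^s h(n) / (2^s ‖M'‖_{ℓ_r(w)}^s)`. -/
def rdfNdual (r : ℝ) (w h : ℕ → ℝ) : ℕ → ℝ := fun n =>
  ∑' s : ℕ, (dualOp w)^[s] h n / (2 ^ s * dualOpNorm r w ^ s)

/-- The `A_∞` quotient of a weight `w` at scale `n`. -/
def aInfQuot (w : ℕ → ℝ) (n : ℕ) : ℝ :=
  ((n : ℝ)⁻¹ * ∑ k ∈ Finset.Icc 1 n, w k) *
    Real.exp ((n : ℝ)⁻¹ * ∑ k ∈ Finset.Icc 1 n, Real.log (1 / w k))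

/-- Membership in the discrete Muckenhoupt class `A_∞`. -/
def MemAInf (w : ℕ → ℝ) : Prop :=
  BddAbove {x : ℝ | ∃ n : ℕ, 1 ≤ n ∧ x = aInfQuot w n}

/-- The `A_∞` norm `[w]_{A_∞}`. -/
def aInfNorm (w : ℕ → ℝ) : ℝ :=
  sSup {x : ℝ | ∃ n : ℕ, 1 ≤ n ∧ x = aInfQuot w n}

namespace RdF

lemma intervalAvg_nonneg {f : ℕ → ℝ} {a b : ℕ} (hf : ∀ k, a ≤ k → 0 ≤ f k) :
    0 ≤ intervalAvg f a b := by
  unfold intervalAvg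
  refine mul_nonneg (by positivity) ?_
  exact Finset.sum_nonneg fun k hk => hf k (Finset.mem_Icc.mp hk).1

lemma intervalAvg_mono {f g : ℕ → ℝ} {a b : ℕ} (hfg : ∀ k, a ≤ k → k ≤ b → f k ≤ g k) :
    intervalAvg f a b ≤ intervalAvg g a b := by
  unfold intervalAvg
  refine mul_le_mul_of_nonneg_left ?_ (by positivity)
  exact Finset.sum_le_sum fun k hk =>
    hfg k (Finset.mem_Icc.mp hk).1 (Finset.mem_Icc.mp hk).2

lemma maxOp_nonneg {f : ℕ → ℝ} (hf : ∀ k, 1 ≤ k → 0 ≤ f k) (n : ℕ) : 0 ≤ maxOp f n := by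
  refine Real.sSup_nonneg ?_
  rintro x ⟨a, b, ha, _, _, rfl⟩
  exact intervalAvg_nonneg fun k hk => hf k (le_trans ha hk)

lemma maxOp_le {f : ℕ → ℝ} {n : ℕ} (hn : 1 ≤ n) {C : ℝ}
    (hC : ∀ a b, 1 ≤ a → a ≤ n → n ≤ b → intervalAvg f a b ≤ C) : maxOp f n ≤ C := by
  refine csSup_le ⟨intervalAvg f n n, n, n, hn, le_rfl, le_rfl, rfl⟩ ?_
  rintro x ⟨a, b, ha, han, hnb, rfl⟩
  exact hC a b ha han hnb

lemma le_maxOp {f : ℕ → ℝ} {n a b : ℕ}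
    (hbdd : BddAbove {x : ℝ | ∃ a b : ℕ, 1 ≤ a ∧ a ≤ n ∧ n ≤ b ∧ x = intervalAvg f a b})
    (ha : 1 ≤ a) (han : a ≤ n) (hnb : n ≤ b) :
    intervalAvg f a b ≤ maxOp f n :=
  le_csSup hbdd ⟨a, b, ha, han, hnb, rfl⟩

section Main

variable {p p' : ℝ} {w : ℕ → ℝ}

lemma conj_exp (hp : 1 < p) (hp' : p' = p / (p - 1)) : p.HolderConjugate p' :=
  (Real.holderConjugate_iff_eq_conjExponent hp).mpr hp'

lemma apNorm_ge (hwAp : MemAp p w) {n : ℕ} (hn : 1 ≤ n) : apQuot p w n ≤ apNorm p w :=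
  le_csSup hwAp ⟨n, hn, rfl⟩

lemma one_le_apNorm (hp : 1 < p) (hw : ∀ k, 1 ≤ k → 0 < w k) (hwAp : MemAp p w) :
    1 ≤ apNorm p w := by
  have hw1 : 0 < w 1 := hw 1 le_rfl
  have hp1 : p - 1 ≠ 0 := sub_ne_zero.mpr hp.ne'
  have h1 : apQuot p w 1 = 1 := by
    unfold apQuot
    rw [Finset.Icc_self, Finset.sum_singleton, Finset.sum_singleton]
    have hmul : (-1 / (p - 1)) * (p - 1) = -1 := div_mul_cancel₀ _ hp1
    rw [Nat.cast_one, inv_one, one_mul, one_mul, ← Real.rpow_mul hw1.le, hmul,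
      Real.rpow_neg_one, mul_inv_cancel₀ hw1.ne']
  calc (1:ℝ) = apQuot p w 1 := h1.symm
    _ ≤ apNorm p w := apNorm_ge hwAp le_rfl

lemma sum_w_pos (hw : ∀ k, 1 ≤ k → 0 < w k) {n : ℕ} (hn : 1 ≤ n) :
    0 < ∑ k ∈ Finset.Icc 1 n, w k :=
  Finset.sum_pos (fun k hk => hw k (Finset.mem_Icc.mp hk).1)
    ⟨1, Finset.mem_Icc.mpr ⟨le_rfl, hn⟩⟩

lemma sum_sigma_pos (hw : ∀ k, 1 ≤ k → 0 < w k) {n : ℕ} (hn : 1 ≤ n) :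
    0 < ∑ k ∈ Finset.Icc 1 n, w k ^ (-1 / (p - 1)) :=
  Finset.sum_pos (fun k hk => Real.rpow_pos_of_pos (hw k (Finset.mem_Icc.mp hk).1) _)
    ⟨1, Finset.mem_Icc.mpr ⟨le_rfl, hn⟩⟩

/-- The `A_p` condition at scale `n`, cleared of denominators. -/
lemma H2 (hp : 1 < p) (hw : ∀ k, 1 ≤ k → 0 < w k) (hwAp : MemAp p w) {n : ℕ} (hn : 1 ≤ n) :
    (∑ k ∈ Finset.Icc 1 n, w k) *
      (∑ k ∈ Finset.Icc 1 n, w k ^ (-1 / (p - 1))) ^ (p - 1) ≤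
      apNorm p w * (n : ℝ) ^ p := by
  have hA := apNorm_ge hwAp hn
  unfold apQuot at hA
  set x := ∑ k ∈ Finset.Icc 1 n, w k with hx
  set y := ∑ k ∈ Finset.Icc 1 n, w k ^ (-1 / (p - 1)) with hy
  have ht : (0:ℝ) < (n:ℝ) := by exact_mod_cast hn
  have hy0 : 0 ≤ y := (sum_sigma_pos hw hn).le
  have htp : (0:ℝ) < (n:ℝ) ^ (p-1) := Real.rpow_pos_of_pos ht _
  rw [Real.mul_rpow (inv_nonneg.mpr ht.le) hy0, Real.inv_rpow ht.le] at hA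
  have hnp : (n:ℝ) ^ p = (n:ℝ) * (n:ℝ) ^ (p-1) := by
    have h := Real.rpow_add ht 1 (p-1)
    rw [Real.rpow_one] at h
    rw [← h]; ring_nf
  have key : x * y ^ (p-1) =
      ((n:ℝ) * (n:ℝ) ^ (p-1)) * (((n:ℝ))⁻¹ * x * (((n:ℝ) ^ (p-1))⁻¹ * y ^ (p-1))) := by
    field_simp
  rw [key, hnp]
  calc ((n:ℝ) * (n:ℝ) ^ (p-1)) * (((n:ℝ))⁻¹ * x * (((n:ℝ) ^ (p-1))⁻¹ * y ^ (p-1)))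
      ≤ ((n:ℝ) * (n:ℝ) ^ (p-1)) * apNorm p w := by
        refine mul_le_mul_of_nonneg_left ?_ (by positivity)
        exact hA
    _ = apNorm p w * ((n:ℝ) * (n:ℝ) ^ (p-1)) := mul_comm _ _

/-- The dual (`σ = w^{1-p'}`) anchored `A_{p'}` condition. -/
lemma D2 (hp : 1 < p) (hp' : p' = p / (p - 1)) (hw : ∀ k, 1 ≤ k → 0 < w k)
    (hwAp : MemAp p w) {n : ℕ} (hn : 1 ≤ n) :
    (∑ k ∈ Finset.Icc 1 n, w k ^ (-1 / (p - 1))) *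
      (∑ k ∈ Finset.Icc 1 n, w k) ^ (p' - 1) ≤
      apNorm p w ^ (p' - 1) * (n : ℝ) ^ p' := by
  have hp1 : (0:ℝ) < p - 1 := sub_pos.mpr hp
  have hr : 0 < p' - 1 := by
    have h : p' - 1 = 1 / (p - 1) := by rw [hp']; field_simp; ring
    rw [h]; positivity
  have he1 : (p - 1) * (p' - 1) = 1 := by
    rw [hp']; field_simp; ring
  have he2 : p * (p' - 1) = p' := by
    rw [hp']; field_simp; ring
  set x := ∑ k ∈ Finset.Icc 1 n, w k with hx
  set y := ∑ k ∈ Finset.Icc 1 n, w k ^ (-1 / (p - 1)) with hy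
  have hx0 : 0 < x := sum_w_pos hw hn
  have hy0 : 0 < y := sum_sigma_pos hw hn
  have ht : (0:ℝ) < (n:ℝ) := by exact_mod_cast hn
  have hA0 : (0:ℝ) < apNorm p w := lt_of_lt_of_le one_pos (one_le_apNorm hp hw hwAp)
  have h2 := H2 hp hw hwAp hn (w := w)
  have h3 : (x * y ^ (p-1)) ^ (p' - 1) ≤ (apNorm p w * (n:ℝ) ^ p) ^ (p' - 1) :=
    Real.rpow_le_rpow (by positivity) h2 hr.le
  have lhs : (x * y ^ (p-1)) ^ (p' - 1) = y * x ^ (p' - 1) := by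
    rw [Real.mul_rpow hx0.le (by positivity), ← Real.rpow_mul hy0.le, he1,
      Real.rpow_one, mul_comm]
  have rhs : (apNorm p w * (n:ℝ) ^ p) ^ (p' - 1) = apNorm p w ^ (p' - 1) * (n:ℝ) ^ p' := by
    rw [Real.mul_rpow hA0.le (by positivity), ← Real.rpow_mul ht.le, he2]
  rw [lhs, rhs] at h3
  exact h3

/-- Hölder: `|E| ≤ (∑_E w)^{1/p} (∑_E σ)^{1/p'}`. -/
lemma H1 (hp : 1 < p) (hp' : p' = p / (p - 1)) (hw : ∀ k, 1 ≤ k → 0 < w k)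
    (E : Finset ℕ) (hE : ∀ k ∈ E, 1 ≤ k) :
    (E.card : ℝ) ≤ (∑ k ∈ E, w k) ^ (1/p) * (∑ k ∈ E, w k ^ (-1 / (p - 1))) ^ (1/p') := by
  have hq := conj_exp hp hp'
  have hpp : (p - 1) * p' = p := hq.sub_one_mul_conj
  have hp0 : p ≠ 0 := hq.ne_zero
  have hp'0 : p' ≠ 0 := hq.symm.ne_zero
  have hp10 : p - 1 ≠ 0 := sub_ne_zero.mpr hp.ne'
  have hexp : (-1 / (p - 1)) * (1/p') = -(1/p) := by
    rw [div_mul_div_comm, hpp]; ring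
  have hh := Real.inner_le_Lp_mul_Lq_of_nonneg (s := E)
    (f := fun k => w k ^ (1/p)) (g := fun k => (w k ^ (-1 / (p - 1))) ^ (1/p')) hq
    (fun k hk => Real.rpow_nonneg (hw k (hE k hk)).le _)
    (fun k hk => Real.rpow_nonneg (Real.rpow_nonneg (hw k (hE k hk)).le _) _)
  have hL : ∑ k ∈ E, (w k ^ (1/p)) * ((w k ^ (-1 / (p - 1))) ^ (1/p')) = (E.card : ℝ) := by
    rw [Finset.card_eq_sum_ones, Nat.cast_sum]
    refine Finset.sum_congr rfl fun k hk => ?_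
    have hwk : 0 < w k := hw k (hE k hk)
    rw [← Real.rpow_mul hwk.le, hexp, ← Real.rpow_add hwk]
    norm_num
  have hR1 : ∑ k ∈ E, (w k ^ (1/p)) ^ p = ∑ k ∈ E, w k := by
    refine Finset.sum_congr rfl fun k hk => ?_
    rw [← Real.rpow_mul (hw k (hE k hk)).le, one_div, inv_mul_cancel₀ hp0, Real.rpow_one]
  have hR2 : ∑ k ∈ E, ((w k ^ (-1 / (p - 1))) ^ (1/p')) ^ p' = ∑ k ∈ E, w k ^ (-1 / (p - 1)) := by
    refine Finset.sum_congr rfl fun k hk => ?_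
    rw [← Real.rpow_mul (Real.rpow_nonneg (hw k (hE k hk)).le _), one_div,
      inv_mul_cancel₀ hp'0, Real.rpow_one]
  rw [hL, hR1, hR2] at hh
  exact hh

/-- sum over `Icc 1 n` splits. -/
lemma sum_split (f : ℕ → ℝ) {n m : ℕ} (hnm : n ≤ m) :
    ∑ k ∈ Finset.Icc 1 n, f k + ∑ k ∈ Finset.Icc (n+1) m, f k = ∑ k ∈ Finset.Icc 1 m, f k := by
  have h1 : Finset.Icc 1 n = Finset.Ico 1 (n+1) := by rw [Finset.Ico_add_one_right_eq_Icc]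
  have h2 : Finset.Icc (n+1) m = Finset.Ico (n+1) (m+1) := by rw [Finset.Ico_add_one_right_eq_Icc]
  have h3 : Finset.Icc 1 m = Finset.Ico 1 (m+1) := by rw [Finset.Ico_add_one_right_eq_Icc]
  rw [h1, h2, h3]
  exact Finset.sum_Ico_consecutive f (by omega) (by omega)

/-- Reverse-doubling inequality for `Sw`. -/
lemma Dw (hp : 1 < p) (hp' : p' = p / (p - 1)) (hw : ∀ k, 1 ≤ k → 0 < w k)
    (hwAp : MemAp p w) {n : ℕ} (hn : 1 ≤ n) :
    ∑ k ∈ Finset.Icc 1 n, w k ≤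
      (1 - (apNorm p w * (2:ℝ) ^ p)⁻¹) * ∑ k ∈ Finset.Icc 1 (2*n), w k := by
  have hq := conj_exp hp hp'
  have hA1 : 1 ≤ apNorm p w := one_le_apNorm hp hw hwAp
  have hA0 : (0:ℝ) < apNorm p w := lt_of_lt_of_le one_pos hA1
  have h2p : (0:ℝ) < (2:ℝ) ^ p := Real.rpow_pos_of_pos two_pos _
  set E : Finset ℕ := Finset.Icc (n+1) (2*n) with hE
  have hEk : ∀ k ∈ E, 1 ≤ k := fun k hk => by
    have := (Finset.mem_Icc.mp hk).1; omega
  have hcard : (E.card : ℝ) = (n : ℝ) := by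
    rw [hE, Nat.card_Icc]; congr 1; omega
  have h2n : 1 ≤ 2*n := by omega
  -- Hölder on E
  have hH1 := H1 hp hp' hw E hEk
  rw [hcard] at hH1
  -- ∑_E σ ≤ Sσ(2n)
  have hEsub : E ⊆ Finset.Icc 1 (2*n) := by
    intro k hk; rw [Finset.mem_Icc] at *; omega
  have hσE : ∑ k ∈ E, w k ^ (-1 / (p - 1)) ≤ ∑ k ∈ Finset.Icc 1 (2*n), w k ^ (-1 / (p - 1)) :=
    Finset.sum_le_sum_of_subset_of_nonneg hEsub
      (fun k hk _ => Real.rpow_nonneg (hw k (by rw [Finset.mem_Icc] at hk; omega)).le _)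
  have hwE0 : 0 ≤ ∑ k ∈ E, w k := Finset.sum_nonneg fun k hk => (hw k (hEk k hk)).le
  have hσ2n0 : 0 ≤ ∑ k ∈ Finset.Icc 1 (2*n), w k ^ (-1 / (p - 1)) := (sum_sigma_pos hw h2n).le
  have step1 : (n : ℝ) ≤ (∑ k ∈ E, w k) ^ (1/p) *
      (∑ k ∈ Finset.Icc 1 (2*n), w k ^ (-1 / (p - 1))) ^ (1/p') :=
    le_trans hH1 (mul_le_mul_of_nonneg_left
      (Real.rpow_le_rpow (Finset.sum_nonneg fun k hk =>
        Real.rpow_nonneg (hw k (hEk k hk)).le _) hσE hq.symm.one_div_nonneg)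
      (Real.rpow_nonneg hwE0 _))
  -- raise to power p
  have hppos : (0:ℝ) < p := hq.pos
  have hstep2 : ((n:ℝ)) ^ p ≤ (∑ k ∈ E, w k) *
      (∑ k ∈ Finset.Icc 1 (2*n), w k ^ (-1 / (p - 1))) ^ (p - 1) := by
    have h := Real.rpow_le_rpow (by positivity) step1 hppos.le
    rw [Real.mul_rpow (Real.rpow_nonneg hwE0 _) (Real.rpow_nonneg hσ2n0 _),
      ← Real.rpow_mul hwE0, ← Real.rpow_mul hσ2n0, one_div, inv_mul_cancel₀ hq.ne_zero,
      Real.rpow_one] at h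
    have hpp' : 1 / p' * p = p - 1 := by
      rw [hp']; field_simp
    rw [hpp'] at h
    exact h
  -- combine with H2 at 2n
  have hH2 := H2 hp hw hwAp h2n (w := w)
  set X := ∑ k ∈ Finset.Icc 1 (2*n), w k with hX
  set Y := (∑ k ∈ Finset.Icc 1 (2*n), w k ^ (-1 / (p - 1))) ^ (p - 1) with hY
  have hX0 : 0 < X := sum_w_pos hw h2n
  have hY0 : 0 < Y := Real.rpow_pos_of_pos (sum_sigma_pos hw h2n) _
  have htn : (0:ℝ) < (n:ℝ) := by exact_mod_cast hn
  have hnp0 : (0:ℝ) < (n:ℝ) ^ p := Real.rpow_pos_of_pos htn _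
  -- X * Y ≤ A * (2n)^p = A * 2^p * n^p
  have h2np : ((2*n : ℕ) : ℝ) ^ p = (2:ℝ) ^ p * (n:ℝ) ^ p := by
    push_cast
    rw [← Real.mul_rpow (by norm_num) htn.le]
  rw [h2np] at hH2
  -- n^p * X ≤ (wE * Y) * X ≤ wE * (A*2^p*n^p)
  have key : (n:ℝ) ^ p * X ≤ (∑ k ∈ E, w k) * (apNorm p w * ((2:ℝ) ^ p * (n:ℝ) ^ p)) := by
    calc (n:ℝ) ^ p * X ≤ ((∑ k ∈ E, w k) * Y) * X :=
          mul_le_mul_of_nonneg_right hstep2 hX0.le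
      _ = (∑ k ∈ E, w k) * (X * Y) := by ring
      _ ≤ (∑ k ∈ E, w k) * (apNorm p w * ((2:ℝ) ^ p * (n:ℝ) ^ p)) :=
          mul_le_mul_of_nonneg_left hH2 hwE0
  -- cancel n^p
  have hXle : X ≤ apNorm p w * (2:ℝ) ^ p * (∑ k ∈ E, w k) := by
    have h := (mul_le_mul_iff_left₀ hnp0).mp (by linarith [key] : X * (n:ℝ)^p ≤
      ((∑ k ∈ E, w k) * (apNorm p w * (2:ℝ) ^ p)) * (n:ℝ)^p)
    linarith [h]
  -- rearrange:  Sw n ≤ (1 - c) * X  with  c = (A 2^p)⁻¹,  wE = X - Sw n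
  have hsplit : ∑ k ∈ Finset.Icc 1 n, w k + ∑ k ∈ E, w k = X := sum_split w (by omega)
  have hc0 : (0:ℝ) < apNorm p w * (2:ℝ) ^ p := by positivity
  have hcX : (apNorm p w * (2:ℝ) ^ p)⁻¹ * X ≤ ∑ k ∈ E, w k := by
    rw [inv_mul_le_iff₀ hc0]
    calc X ≤ apNorm p w * (2:ℝ) ^ p * (∑ k ∈ E, w k) := hXle
      _ = apNorm p w * (2:ℝ) ^ p * (∑ k ∈ E, w k) := rfl
  nlinarith [hcX, hsplit]

/-- Dyadic lower bound for `Sw`. -/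
lemma Sw_dyadic (hp : 1 < p) (hp' : p' = p / (p - 1)) (hw : ∀ k, 1 ≤ k → 0 < w k)
    (hwAp : MemAp p w) (j : ℕ) :
    w 1 ≤ (1 - (apNorm p w * (2:ℝ) ^ p)⁻¹) ^ j * ∑ k ∈ Finset.Icc 1 (2^j), w k := by
  set θ := 1 - (apNorm p w * (2:ℝ) ^ p)⁻¹ with hθ
  have hA1 : 1 ≤ apNorm p w := one_le_apNorm hp hw hwAp
  have h2p : (1:ℝ) < (2:ℝ) ^ p := Real.one_lt_rpow_iff_of_pos two_pos |>.mpr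
    (Or.inl ⟨one_lt_two, lt_trans one_pos hp⟩)
  have hθ0 : 0 < θ := by
    rw [hθ]; have : (apNorm p w * (2:ℝ) ^ p)⁻¹ < 1 := by
      rw [inv_lt_one_iff₀]; right; nlinarith
    linarith
  have hθ1 : θ < 1 := by
    rw [hθ]; have : 0 < (apNorm p w * (2:ℝ) ^ p)⁻¹ := by positivity
    linarith
  induction j with
  | zero =>
    have h20 : (2:ℕ) ^ 0 = 1 := rfl
    rw [h20, pow_zero, one_mul, Finset.Icc_self, Finset.sum_singleton]
  | succ j ih =>
    have hstep := Dw hp hp' hw hwAp (n := 2^j) (Nat.one_le_two_pow)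
    have h2 : 2 * 2^j = 2^(j+1) := by ring
    rw [h2] at hstep
    calc w 1 ≤ θ ^ j * ∑ k ∈ Finset.Icc 1 (2^j), w k := ih
      _ ≤ θ ^ j * (θ * ∑ k ∈ Finset.Icc 1 (2^(j+1)), w k) :=
          mul_le_mul_of_nonneg_left hstep (by positivity)
      _ = θ ^ (j+1) * ∑ k ∈ Finset.Icc 1 (2^(j+1)), w k := by ring

/-- Key tail estimate: `∑ σ(n)/n^{p'} < ∞`, plus a uniform bound. -/
lemma tail_summable (hp : 1 < p) (hp' : p' = p / (p - 1)) (hw : ∀ k, 1 ≤ k → 0 < w k)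
    (hwAp : MemAp p w) :
    Summable (fun k : ℕ => w (k+1) ^ (-1 / (p - 1)) / ((k+1 : ℕ) : ℝ) ^ p') := by
  have hq := conj_exp hp hp'
  have hp'1 : 1 < p' := hq.symm.lt
  have hr : 0 < p' - 1 := by linarith
  set A := apNorm p w with hA
  have hA1 : 1 ≤ A := one_le_apNorm hp hw hwAp
  have hA0 : (0:ℝ) < A := by linarith
  have hw1 : 0 < w 1 := hw 1 le_rfl
  set θ := 1 - (A * (2:ℝ) ^ p)⁻¹ with hθdef
  have h2p : (1:ℝ) < (2:ℝ) ^ p := Real.one_lt_rpow_iff_of_pos two_pos |>.mpr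
    (Or.inl ⟨one_lt_two, lt_trans one_pos hp⟩)
  have hθ0 : 0 < θ := by
    rw [hθdef]
    have : (A * (2:ℝ) ^ p)⁻¹ < 1 := by
      rw [inv_lt_one_iff₀]; right; nlinarith
    linarith
  have hθ1 : θ < 1 := by
    rw [hθdef]
    have : 0 < (A * (2:ℝ) ^ p)⁻¹ := by positivity
    linarith
  set ρ := θ ^ (p' - 1) with hρdef
  have hρ0 : 0 < ρ := Real.rpow_pos_of_pos hθ0 _
  have hρ1 : ρ < 1 := Real.rpow_lt_one hθ0.le hθ1 hr
  set C₁ := A ^ (p' - 1) * (2:ℝ) ^ p' / w 1 ^ (p' - 1) with hC₁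
  have hC₁0 : 0 ≤ C₁ := by
    rw [hC₁]; positivity
  set F : ℕ → ℝ := fun m => w m ^ (-1 / (p - 1)) / (m : ℝ) ^ p' with hF
  have hF0 : ∀ m, 1 ≤ m → 0 ≤ F m := fun m hm => by
    rw [hF]
    have := hw m hm
    positivity
  -- block bound
  have block : ∀ j : ℕ, ∑ m ∈ Finset.Ico (2^j) (2^(j+1)), F m ≤ C₁ * ρ ^ j := by
    intro j
    set M := 2^(j+1) with hM
    have h2j : (1:ℕ) ≤ 2^j := Nat.one_le_two_pow
    have h2jR : (0:ℝ) < ((2^j : ℕ) : ℝ) := by positivity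
    have hMpos : (1:ℕ) ≤ M := Nat.one_le_two_pow
    -- each term ≤ σ m / (2^j)^{p'}
    have hterm : ∀ m ∈ Finset.Ico (2^j) (2^(j+1)), F m ≤
        w m ^ (-1 / (p - 1)) / ((2^j : ℕ) : ℝ) ^ p' := by
      intro m hm
      rw [Finset.mem_Ico] at hm
      have hm1 : 1 ≤ m := le_trans h2j hm.1
      have hmR : ((2^j : ℕ) : ℝ) ≤ (m : ℝ) := by exact_mod_cast hm.1
      have hle : ((2^j : ℕ) : ℝ) ^ p' ≤ (m : ℝ) ^ p' :=
        Real.rpow_le_rpow (by positivity) hmR (by linarith)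
      exact div_le_div_of_nonneg_left (Real.rpow_nonneg (hw m hm1).le _)
        (Real.rpow_pos_of_pos h2jR _) hle
    have hsum1 : ∑ m ∈ Finset.Ico (2^j) (2^(j+1)), F m ≤
        (∑ m ∈ Finset.Ico (2^j) (2^(j+1)), w m ^ (-1 / (p - 1))) / ((2^j : ℕ) : ℝ) ^ p' := by
      rw [Finset.sum_div]
      exact Finset.sum_le_sum hterm
    have hsub : Finset.Ico (2^j) (2^(j+1)) ⊆ Finset.Icc 1 M := by
      intro m hm; rw [Finset.mem_Ico] at hm; rw [Finset.mem_Icc]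
      constructor
      · exact le_trans h2j hm.1
      · omega
    have hsum2 : ∑ m ∈ Finset.Ico (2^j) (2^(j+1)), w m ^ (-1 / (p - 1)) ≤
        ∑ m ∈ Finset.Icc 1 M, w m ^ (-1 / (p - 1)) :=
      Finset.sum_le_sum_of_subset_of_nonneg hsub
        (fun m hm _ => Real.rpow_nonneg (hw m (Finset.mem_Icc.mp hm).1).le _)
    -- Sσ(M) bound via D2 and dyadic growth
    have hD2 := D2 hp hp' hw hwAp (n := M) hMpos
    have hdyadic := Sw_dyadic hp hp' hw hwAp (j+1) (w := w)
    rw [← hA, ← hθdef] at hdyadic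
    set SwM := ∑ k ∈ Finset.Icc 1 M, w k with hSwM
    set SσM := ∑ k ∈ Finset.Icc 1 M, w k ^ (-1 / (p - 1)) with hSσM
    have hSwM0 : 0 < SwM := sum_w_pos hw hMpos
    have hSσM0 : 0 < SσM := sum_sigma_pos hw hMpos
    -- 1 ≤ SwM * θ^{j+1} / w 1 so  SσM ≤ SσM * (SwM θ^{j+1}/w1)^{p'-1}
    have hone : 1 ≤ SwM * θ ^ (j+1) / w 1 := by
      rw [le_div_iff₀ hw1, one_mul]
      calc w 1 ≤ θ ^ (j+1) * SwM := hdyadic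
        _ = SwM * θ ^ (j+1) := by ring
    have honep : 1 ≤ (SwM * θ ^ (j+1) / w 1) ^ (p' - 1) :=
      Real.one_le_rpow hone hr.le
    have hmulexp : (SwM * θ ^ (j+1) / w 1) ^ (p' - 1) =
        SwM ^ (p' - 1) * ((θ ^ (j+1) / w 1) ^ (p' - 1)) := by
      rw [mul_div_assoc, Real.mul_rpow hSwM0.le (by positivity)]
    have key : SσM ≤ A ^ (p' - 1) * (M : ℝ) ^ p' * ((θ ^ (j+1) / w 1) ^ (p' - 1)) := by
      calc SσM = SσM * 1 := (mul_one _).symm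
        _ ≤ SσM * (SwM * θ ^ (j+1) / w 1) ^ (p' - 1) :=
            mul_le_mul_of_nonneg_left honep hSσM0.le
        _ = (SσM * SwM ^ (p' - 1)) * ((θ ^ (j+1) / w 1) ^ (p' - 1)) := by
            rw [hmulexp]; ring
        _ ≤ (A ^ (p' - 1) * (M : ℝ) ^ p') * ((θ ^ (j+1) / w 1) ^ (p' - 1)) := by
            refine mul_le_mul_of_nonneg_right hD2 (by positivity)
    -- (M:ℝ)^{p'} = 2^{p'} * (2^j:ℝ)^{p'}
    have hMR : (M : ℝ) ^ p' = (2:ℝ) ^ p' * ((2^j : ℕ) : ℝ) ^ p' := by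
      have : (M : ℝ) = 2 * ((2^j : ℕ) : ℝ) := by
        rw [hM]; push_cast; ring
      rw [this, Real.mul_rpow (by norm_num) (by positivity)]
    -- (θ^{j+1}/w1)^{p'-1} = ρ^{j+1} / w1^{p'-1}
    have hθexp : ((θ ^ (j+1) : ℝ)) ^ (p' - 1) = ρ ^ (j+1) := by
      rw [hρdef, ← Real.rpow_natCast θ (j+1), ← Real.rpow_mul hθ0.le,
        mul_comm, Real.rpow_mul hθ0.le, Real.rpow_natCast]
    have hdivexp : ((θ ^ (j+1) / w 1 : ℝ)) ^ (p' - 1) = ρ ^ (j+1) / w 1 ^ (p' - 1) := by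
      rw [Real.div_rpow (by positivity) hw1.le, hθexp]
    -- put it together
    have hρj : ρ ^ (j+1) ≤ ρ ^ j := by
      calc ρ ^ (j+1) = ρ ^ j * ρ := by ring
        _ ≤ ρ ^ j * 1 := mul_le_mul_of_nonneg_left hρ1.le (by positivity)
        _ = ρ ^ j := mul_one _
    calc ∑ m ∈ Finset.Ico (2^j) (2^(j+1)), F m
        ≤ SσM / ((2^j : ℕ) : ℝ) ^ p' := by
          refine le_trans hsum1 ?_
          gcongr
      _ ≤ (A ^ (p' - 1) * (M : ℝ) ^ p' * ((θ ^ (j+1) / w 1) ^ (p' - 1))) / ((2^j : ℕ) : ℝ) ^ p' := by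
          gcongr
      _ = A ^ (p' - 1) * (2:ℝ) ^ p' * (ρ ^ (j+1) / w 1 ^ (p' - 1)) := by
          rw [hMR, hdivexp]
          field_simp
      _ = C₁ * ρ ^ (j+1) := by rw [hC₁]; ring
      _ ≤ C₁ * ρ ^ j := mul_le_mul_of_nonneg_left hρj hC₁0
  -- partial sums over initial segments
  have hIco : ∀ J : ℕ, ∑ m ∈ Finset.Ico 1 (2^J), F m ≤ C₁ * (1 - ρ)⁻¹ := by
    intro J
    have hsum : ∀ J : ℕ, ∑ m ∈ Finset.Ico 1 (2^J), F m = ∑ j ∈ Finset.range J,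
        ∑ m ∈ Finset.Ico (2^j) (2^(j+1)), F m := by
      intro J
      induction J with
      | zero => simp
      | succ J ih =>
        rw [Finset.sum_range_succ, ← ih,
          Finset.sum_Ico_consecutive F (Nat.one_le_two_pow) (by
            exact Nat.pow_le_pow_right (by norm_num) (by omega))]
    rw [hsum J]
    calc ∑ j ∈ Finset.range J, ∑ m ∈ Finset.Ico (2^j) (2^(j+1)), F m
        ≤ ∑ j ∈ Finset.range J, C₁ * ρ ^ j := Finset.sum_le_sum fun j _ => block j
      _ = C₁ * ∑ j ∈ Finset.range J, ρ ^ j := by rw [Finset.mul_sum]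
      _ ≤ C₁ * (1 - ρ)⁻¹ := by
          refine mul_le_mul_of_nonneg_left ?_ hC₁0
          have := Summable.sum_le_tsum (Finset.range J) (fun i _ => by positivity)
            (summable_geometric_of_lt_one hρ0.le hρ1)
          rw [tsum_geometric_of_lt_one hρ0.le hρ1] at this
          exact this
  -- conclude summability
  refine summable_of_sum_range_le (c := C₁ * (1 - ρ)⁻¹)
    (fun n => hF0 (n+1) (by omega)) ?_
  intro N
  have hshift : ∑ n ∈ Finset.range N, F (n+1) = ∑ m ∈ Finset.Ico 1 (N+1), F m := by
    rw [Finset.sum_Ico_eq_sum_range]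
    simp only [Nat.add_sub_cancel]
    refine Finset.sum_congr rfl fun i _ => by rw [Nat.add_comm]
  rw [hshift]
  calc ∑ m ∈ Finset.Ico 1 (N+1), F m ≤ ∑ m ∈ Finset.Ico 1 (2^(N+1)), F m := by
        refine Finset.sum_le_sum_of_subset_of_nonneg ?_
          (fun m hm _ => hF0 m (Finset.mem_Ico.mp hm).1)
        intro m hm; rw [Finset.mem_Ico] at *
        exact ⟨hm.1, lt_of_lt_of_le hm.2 (le_of_lt (Nat.lt_two_pow_self (n := N+1)))⟩
    _ ≤ C₁ * (1 - ρ)⁻¹ := hIco (N+1)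


/-! ### Norm helpers -/

lemma lpTerm_nonneg (hw : ∀ k, 1 ≤ k → 0 < w k) (f : ℕ → ℝ) (k : ℕ) :
    0 ≤ w (k+1) * |f (k+1)| ^ p' :=
  mul_nonneg (hw (k+1) (by omega)).le (Real.rpow_nonneg (abs_nonneg _) _)

lemma lpNormW_nonneg (hw : ∀ k, 1 ≤ k → 0 < w k) (f : ℕ → ℝ) :
    0 ≤ lpNormW p' w f :=
  Real.rpow_nonneg (tsum_nonneg (lpTerm_nonneg hw f)) _

lemma tsum_eq_norm_rpow (hp : 1 < p) (hp' : p' = p / (p - 1)) (hw : ∀ k, 1 ≤ k → 0 < w k)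
    (f : ℕ → ℝ) :
    ∑' k, w (k+1) * |f (k+1)| ^ p' = (lpNormW p' w f) ^ p' := by
  have hq := conj_exp hp hp'
  rw [lpNormW, one_div, Real.rpow_inv_rpow (tsum_nonneg (lpTerm_nonneg hw f)) hq.symm.ne_zero]

lemma pointwise_le (hp : 1 < p) (hp' : p' = p / (p - 1)) (hw : ∀ k, 1 ≤ k → 0 < w k)
    {f : ℕ → ℝ} (hfLp : MemLp p' w f) {n : ℕ} (hn : 1 ≤ n) :
    w n * |f n| ^ p' ≤ (lpNormW p' w f) ^ p' := by
  rw [← tsum_eq_norm_rpow hp hp' hw f]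
  have h := Summable.le_tsum hfLp (n-1) (fun j _ => lpTerm_nonneg hw f j)
  have hn1 : n - 1 + 1 = n := by omega
  rwa [hn1] at h

/-- From the `p'`-th power bound extract a linear bound. -/
lemma rpow_le_of_pow_le {x y : ℝ} (hx : 0 ≤ x) (hy : 0 ≤ y) (hp'1 : 1 < p')
    (h : x ^ p' ≤ y ^ p') : x ≤ y := by
  have hne : p' ≠ 0 := by linarith
  calc x = (x ^ p') ^ p'⁻¹ := (Real.rpow_rpow_inv hx hne).symm
    _ ≤ (y ^ p') ^ p'⁻¹ := Real.rpow_le_rpow (Real.rpow_nonneg hx _) h (by positivity)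
    _ = y := Real.rpow_rpow_inv hy hne

lemma memLp_mono (hw : ∀ k, 1 ≤ k → 0 < w k) {f g : ℕ → ℝ}
    (hf : ∀ k, 1 ≤ k → |f k| ≤ |g k|) (hgLp : MemLp p' w g) (hp'0 : 0 ≤ p') :
    MemLp p' w f := by
  refine Summable.of_nonneg_of_le (lpTerm_nonneg hw f) (fun k => ?_) hgLp
  exact mul_le_mul_of_nonneg_left
    (Real.rpow_le_rpow (abs_nonneg _) (hf (k+1) (by omega)) hp'0)
    (hw (k+1) (by omega)).le

lemma lpNormW_mono (hp : 1 < p) (hp' : p' = p / (p - 1)) (hw : ∀ k, 1 ≤ k → 0 < w k)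
    {f g : ℕ → ℝ} (hf : ∀ k, 1 ≤ k → |f k| ≤ |g k|) (hgLp : MemLp p' w g) :
    lpNormW p' w f ≤ lpNormW p' w g := by
  have hq := conj_exp hp hp'
  have hfLp : MemLp p' w f := memLp_mono hw hf hgLp hq.symm.nonneg
  refine Real.rpow_le_rpow (tsum_nonneg (lpTerm_nonneg hw f)) ?_ hq.symm.one_div_nonneg
  refine Summable.tsum_le_tsum (fun k => ?_) hfLp hgLp
  exact mul_le_mul_of_nonneg_left
    (Real.rpow_le_rpow (abs_nonneg _) (hf (k+1) (by omega)) hq.symm.nonneg)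
    (hw (k+1) (by omega)).le

/-- Division by a positive constant. -/
lemma lpNormW_div_const (hp : 1 < p) (hp' : p' = p / (p - 1)) (hw : ∀ k, 1 ≤ k → 0 < w k)
    (f : ℕ → ℝ) {d : ℝ} (hd : 0 < d) :
    MemLp p' w f → (MemLp p' w (fun k => f k / d) ∧
      lpNormW p' w (fun k => f k / d) = lpNormW p' w f / d) := by
  intro hfLp
  have hq := conj_exp hp hp'
  have hterm : ∀ k : ℕ, w (k+1) * |f (k+1) / d| ^ p' =
      (w (k+1) * |f (k+1)| ^ p') / d ^ p' := by
    intro k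
    rw [abs_div, abs_of_nonneg hd.le, Real.div_rpow (abs_nonneg _) hd.le]
    ring
  constructor
  · rw [MemLp]
    simp_rw [hterm]
    exact hfLp.div_const _
  · rw [lpNormW, lpNormW]
    simp_rw [hterm]
    rw [tsum_div_const, Real.div_rpow (tsum_nonneg (lpTerm_nonneg hw f))
      (Real.rpow_nonneg hd.le _), one_div, Real.rpow_rpow_inv hd.le hq.symm.ne_zero]

/-- Minkowski inequality for `lpNormW`. -/
lemma lpNormW_add (hp : 1 < p) (hp' : p' = p / (p - 1)) (hw : ∀ k, 1 ≤ k → 0 < w k)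
    {f g : ℕ → ℝ} (hf : ∀ k, 0 ≤ f k) (hg : ∀ k, 0 ≤ g k)
    (hfLp : MemLp p' w f) (hgLp : MemLp p' w g) :
    MemLp p' w (fun k => f k + g k) ∧
      lpNormW p' w (fun k => f k + g k) ≤ lpNormW p' w f + lpNormW p' w g := by
  have hq := conj_exp hp hp'
  have hp'0 : p' ≠ 0 := hq.symm.ne_zero
  set F : ℕ → ℝ := fun k => w (k+1) ^ (1/p') * f (k+1) with hF
  set G : ℕ → ℝ := fun k => w (k+1) ^ (1/p') * g (k+1) with hG
  have hwpos : ∀ k : ℕ, (0:ℝ) < w (k+1) := fun k => hw (k+1) (by omega)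
  have hFk : ∀ k, F k ^ p' = w (k+1) * |f (k+1)| ^ p' := by
    intro k
    rw [hF, Real.mul_rpow (Real.rpow_nonneg (hwpos k).le _) (hf _), one_div,
      Real.rpow_inv_rpow (hwpos k).le hp'0, abs_of_nonneg (hf _)]
  have hGk : ∀ k, G k ^ p' = w (k+1) * |g (k+1)| ^ p' := by
    intro k
    rw [hG, Real.mul_rpow (Real.rpow_nonneg (hwpos k).le _) (hg _), one_div,
      Real.rpow_inv_rpow (hwpos k).le hp'0, abs_of_nonneg (hg _)]
  have hFGk : ∀ k, (F k + G k) ^ p' = w (k+1) * |f (k+1) + g (k+1)| ^ p' := by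
    intro k
    have : F k + G k = w (k+1) ^ (1/p') * (f (k+1) + g (k+1)) := by rw [hF, hG]; ring
    rw [this, Real.mul_rpow (Real.rpow_nonneg (hwpos k).le _)
      (add_nonneg (hf _) (hg _)), one_div, Real.rpow_inv_rpow (hwpos k).le hp'0,
      abs_of_nonneg (add_nonneg (hf _) (hg _))]
  have hFs : Summable fun k => F k ^ p' := by simp_rw [hFk]; exact hfLp
  have hGs : Summable fun k => G k ^ p' := by simp_rw [hGk]; exact hgLp
  have hmink := Real.Lp_add_le_tsum_of_nonneg hq.symm.lt.le
    (fun k => mul_nonneg (Real.rpow_nonneg (hwpos k).le _) (hf _))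
    (fun k => mul_nonneg (Real.rpow_nonneg (hwpos k).le _) (hg _)) hFs hGs
  constructor
  · rw [MemLp]
    have := (hmink.1 : Summable fun k => (F k + G k) ^ p')
    exact this.congr hFGk
  · have := (hmink.2 : (∑' k, (F k + G k) ^ p') ^ (1/p') ≤ (∑' k, F k ^ p') ^ (1/p') + (∑' k, G k ^ p') ^ (1/p'))
    rw [tsum_congr hFGk, tsum_congr hFk, tsum_congr hGk] at this
    rw [lpNormW, lpNormW, lpNormW]
    exact this


/-! ### Truncation -/

def trunc (f : ℕ → ℝ) (B : ℕ) : ℕ → ℝ := fun k => if k ≤ B then f k else 0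

lemma trunc_nonneg {f : ℕ → ℝ} (hf : ∀ k, 0 ≤ f k) (B k : ℕ) : 0 ≤ trunc f B k := by
  unfold trunc; split <;> [exact hf k; exact le_rfl]

lemma trunc_le {f : ℕ → ℝ} (hf : ∀ k, 0 ≤ f k) (B k : ℕ) : trunc f B k ≤ f k := by
  unfold trunc; split <;> [exact le_rfl; exact hf k]

lemma trunc_mono {f : ℕ → ℝ} (hf : ∀ k, 0 ≤ f k) {B B' : ℕ} (hB : B ≤ B') (k : ℕ) :
    trunc f B k ≤ trunc f B' k := by
  unfold trunc
  by_cases h1 : k ≤ B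
  · rw [if_pos h1, if_pos (le_trans h1 hB)]
  · rw [if_neg h1]; exact trunc_nonneg hf B' k

lemma trunc_eq_on {f : ℕ → ℝ} {B k : ℕ} (h : k ≤ B) : trunc f B k = f k := if_pos h

lemma memLp_trunc (hw : ∀ k, 1 ≤ k → 0 < w k) (hp : 1 < p) (hp' : p' = p / (p - 1))
    {f : ℕ → ℝ} (hf : ∀ k, 0 ≤ f k) (hfLp : MemLp p' w f) (B : ℕ) :
    MemLp p' w (trunc f B) := by
  have hq := conj_exp hp hp'
  refine memLp_mono hw (fun k _ => ?_) hfLp hq.symm.nonneg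
  rw [abs_of_nonneg (trunc_nonneg hf B k), abs_of_nonneg (hf k)]
  exact trunc_le hf B k

lemma sum_wtrunc_le (hw : ∀ k, 1 ≤ k → 0 < w k) {f : ℕ → ℝ} (hf : ∀ k, 0 ≤ f k)
    {a : ℕ} (b B : ℕ) (ha : 1 ≤ a) :
    ∑ k ∈ Finset.Icc a b, w k * trunc f B k ≤ ∑ k ∈ Finset.Icc 1 B, w k * f k := by
  have h1 : ∑ k ∈ Finset.Icc a b, w k * trunc f B k =
      ∑ k ∈ (Finset.Icc a b).filter (· ≤ B), w k * f k := by
    rw [Finset.sum_filter]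
    refine Finset.sum_congr rfl fun k _ => ?_
    unfold trunc
    split <;> simp_all
  rw [h1]
  refine Finset.sum_le_sum_of_subset_of_nonneg ?_ fun k hk _ =>
    mul_nonneg (hw k (Finset.mem_Icc.mp hk).1).le (hf k)
  intro k hk
  rw [Finset.mem_filter, Finset.mem_Icc] at hk
  rw [Finset.mem_Icc]
  omega

lemma avg_wtrunc_le (hw : ∀ k, 1 ≤ k → 0 < w k) {f : ℕ → ℝ} (hf : ∀ k, 0 ≤ f k)
    {a : ℕ} (b B : ℕ) (ha : 1 ≤ a) :
    intervalAvg (fun k => w k * trunc f B k) a b ≤ ∑ k ∈ Finset.Icc 1 B, w k * f k := by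
  set SB := ∑ k ∈ Finset.Icc 1 B, w k * f k with hSB
  have hSB0 : 0 ≤ SB := Finset.sum_nonneg fun k hk =>
    mul_nonneg (hw k (Finset.mem_Icc.mp hk).1).le (hf k)
  have hsum0 : 0 ≤ ∑ k ∈ Finset.Icc a b, w k * trunc f B k :=
    Finset.sum_nonneg fun k hk => mul_nonneg
      (hw k (le_trans ha (Finset.mem_Icc.mp hk).1)).le (trunc_nonneg hf B k)
  unfold intervalAvg
  rcases Nat.eq_zero_or_pos (Finset.Icc a b).card with hc | hc
  · rw [hc]; simpa using hSB0
  · have hinv : ((Finset.Icc a b).card : ℝ)⁻¹ ≤ 1 := by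
      rw [inv_le_one_iff₀]; right; exact_mod_cast hc
    calc ((Finset.Icc a b).card : ℝ)⁻¹ * ∑ k ∈ Finset.Icc a b, w k * trunc f B k
        ≤ 1 * SB := mul_le_mul hinv (sum_wtrunc_le hw hf b B ha) hsum0 one_pos.le
      _ = SB := one_mul _

lemma bddAbove_trunc (hw : ∀ k, 1 ≤ k → 0 < w k) {f : ℕ → ℝ} (hf : ∀ k, 0 ≤ f k)
    (B n : ℕ) :
    BddAbove {x : ℝ | ∃ a b : ℕ, 1 ≤ a ∧ a ≤ n ∧ n ≤ b ∧
      x = intervalAvg (fun k => w k * trunc f B k) a b} := by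
  refine ⟨∑ k ∈ Finset.Icc 1 B, w k * f k, ?_⟩
  rintro x ⟨a, b, ha, _, _, rfl⟩
  exact avg_wtrunc_le hw hf b B ha

lemma maxOp_trunc_le (hw : ∀ k, 1 ≤ k → 0 < w k) {f : ℕ → ℝ} (hf : ∀ k, 0 ≤ f k)
    (B : ℕ) {n : ℕ} (hn : 1 ≤ n) :
    maxOp (fun k => w k * trunc f B k) n ≤
      2 * (B+1) * (∑ k ∈ Finset.Icc 1 B, w k * f k) / n := by
  set SB := ∑ k ∈ Finset.Icc 1 B, w k * f k with hSB
  have hSB0 : 0 ≤ SB := Finset.sum_nonneg fun k hk =>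
    mul_nonneg (hw k (Finset.mem_Icc.mp hk).1).le (hf k)
  have hnR : (0:ℝ) < (n:ℝ) := by exact_mod_cast hn
  refine maxOp_le hn fun a b ha han hnb => ?_
  by_cases hcase : n ≤ 2 * (B+1)
  · calc intervalAvg (fun k => w k * trunc f B k) a b ≤ SB := avg_wtrunc_le hw hf b B ha
      _ ≤ 2 * (B+1) * SB / n := by
          rw [le_div_iff₀ hnR]
          have h1 : (n:ℝ) ≤ 2*(B+1) := by exact_mod_cast hcase
          nlinarith
  · push_neg at hcase
    by_cases hB : B < a
    · have hz : intervalAvg (fun k => w k * trunc f B k) a b = 0 := by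
        unfold intervalAvg
        rw [Finset.sum_eq_zero, mul_zero]
        intro k hk
        have := (Finset.mem_Icc.mp hk).1
        rw [trunc, if_neg (by omega), mul_zero]
      rw [hz]
      positivity
    · push_neg at hB
      -- a ≤ B, so card ≥ n + 1 - B ≥ n/2
      have hab : a ≤ b := le_trans han hnb
      have hcard : (Finset.Icc a b).card = b + 1 - a := Nat.card_Icc a b
      have hcard2 : n + 1 - B ≤ (Finset.Icc a b).card := by omega
      have hBn : B ≤ n := by omega
      have hcardR : (n:ℝ) / 2 ≤ ((Finset.Icc a b).card : ℝ) := by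
        have h1 : ((n + 1 - B : ℕ) : ℝ) ≤ ((Finset.Icc a b).card : ℝ) := by
          exact_mod_cast hcard2
        have h2 : ((n + 1 - B : ℕ) : ℝ) = (n:ℝ) + 1 - (B:ℝ) := by
          have : B ≤ n + 1 := by omega
          push_cast [this]
          ring
        have h3 : (B:ℝ) ≤ ((n:ℝ) - 2) / 2 := by
          have : (2*(B+1) : ℕ) < n := hcase
          have h4 : 2*((B:ℝ)+1) < (n:ℝ) := by exact_mod_cast this
          linarith
        linarith
      have hcardpos : (0:ℝ) < ((Finset.Icc a b).card : ℝ) := by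
        have : 0 < (Finset.Icc a b).card := by
          rw [hcard]; omega
        exact_mod_cast this
      have hinv : ((Finset.Icc a b).card : ℝ)⁻¹ ≤ 2 / n := by
        have h := one_div_le_one_div_of_le (by positivity : (0:ℝ) < (n:ℝ)/2) hcardR
        rw [one_div_div] at h
        rw [inv_eq_one_div]
        exact h
      calc intervalAvg (fun k => w k * trunc f B k) a b
          ≤ (2 / n) * SB := by
            unfold intervalAvg
            refine mul_le_mul hinv (sum_wtrunc_le hw hf b B ha) ?_ (by positivity)
            exact Finset.sum_nonneg fun k hk => mul_nonneg
              (hw k (le_trans ha (Finset.mem_Icc.mp hk).1)).le (trunc_nonneg hf B k)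
        _ ≤ 2 * (B+1) * SB / n := by
            rw [div_mul_eq_mul_div, div_le_div_iff₀ hnR hnR]
            have hB1 : (0:ℝ) ≤ 2*(B:ℝ) := by positivity
            nlinarith [mul_nonneg (mul_nonneg hB1 hSB0) hnR.le]


/-! ### The dual operator -/

lemma maxOp_zero (f : ℕ → ℝ) : maxOp f 0 = 0 := by
  unfold maxOp
  have : {x : ℝ | ∃ a b : ℕ, 1 ≤ a ∧ a ≤ 0 ∧ 0 ≤ b ∧ x = intervalAvg f a b} = ∅ := by
    ext x
    simp only [Set.mem_setOf_eq, Set.mem_empty_iff_false, iff_false]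
    rintro ⟨a, b, ha, han, _, _⟩
    omega
  rw [this, Real.sSup_empty]

lemma dualOp_nonneg (hw : ∀ k, 1 ≤ k → 0 < w k) {f : ℕ → ℝ} (hf : ∀ k, 0 ≤ f k) (k : ℕ) :
    0 ≤ dualOp w f k := by
  rcases Nat.eq_zero_or_pos k with hk | hk
  · rw [hk, dualOp, maxOp_zero, zero_div]
  · exact div_nonneg
      (maxOp_nonneg (fun j hj => mul_nonneg (hw j hj).le (hf j)) k) (hw k hk).le

lemma memLp_dual_trunc (hp : 1 < p) (hp' : p' = p / (p - 1)) (hw : ∀ k, 1 ≤ k → 0 < w k)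
    (hwAp : MemAp p w) {f : ℕ → ℝ} (hf : ∀ k, 0 ≤ f k) (B : ℕ) :
    MemLp p' w (dualOp w (trunc f B)) := by
  have hq := conj_exp hp hp'
  set SB := ∑ k ∈ Finset.Icc 1 B, w k * f k with hSB
  have hSB0 : 0 ≤ SB := Finset.sum_nonneg fun k hk =>
    mul_nonneg (hw k (Finset.mem_Icc.mp hk).1).le (hf k)
  set D := 2 * ((B:ℝ)+1) * SB with hD
  have hD0 : 0 ≤ D := by rw [hD]; positivity
  have hexp : 1 - p' = -1 / (p - 1) := by
    rw [hp']
    have h : p - 1 ≠ 0 := sub_ne_zero.mpr hp.ne'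
    field_simp
    ring
  refine Summable.of_nonneg_of_le (lpTerm_nonneg hw _) (fun k => ?_)
    (Summable.mul_left (D ^ p') (tail_summable hp hp' hw hwAp))
  set m := k + 1 with hm
  have hm1 : 1 ≤ m := by omega
  have hwm := hw m hm1
  have hmR : (0:ℝ) < ((m:ℕ):ℝ) := by exact_mod_cast hm1
  set X := maxOp (fun j => w j * trunc f B j) m with hX
  have hX0 : 0 ≤ X :=
    maxOp_nonneg (fun j hj => mul_nonneg (hw j hj).le (trunc_nonneg hf B j)) m
  have hXle : X ≤ D / m := by
    have h := maxOp_trunc_le hw hf B hm1 (w := w)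
    rw [← hX, ← hSB] at h
    calc X ≤ 2 * (B+1) * SB / m := h
      _ = D / m := by rw [hD]
  have hdual : dualOp w (trunc f B) m = X / w m := rfl
  rw [hdual, abs_of_nonneg (div_nonneg hX0 hwm.le)]
  have hσ : w m ^ (-1 / (p - 1)) = w m / w m ^ p' := by
    rw [← hexp]
    have h := Real.rpow_sub hwm 1 p'
    rw [Real.rpow_one] at h
    exact h
  calc w m * (X / w m) ^ p'
      ≤ w m * ((D / m) / w m) ^ p' := by
        refine mul_le_mul_of_nonneg_left ?_ hwm.le
        refine Real.rpow_le_rpow (div_nonneg hX0 hwm.le) ?_ hq.symm.nonneg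
        gcongr
    _ = D ^ p' * (w m ^ (-1 / (p - 1)) / ((m:ℕ):ℝ) ^ p') := by
        rw [Real.div_rpow (div_nonneg hD0 hmR.le) hwm.le,
          Real.div_rpow hD0 hmR.le, hσ]
        ring


/-- Main operator lemma: boundedness of `M'` with genuine summability. -/
lemma stepC (hp : 1 < p) (hp' : p' = p / (p - 1)) (hw : ∀ k, 1 ≤ k → 0 < w k)
    (hwAp : MemAp p w) {K : ℝ} (hK : 0 ≤ K) (hM : IsDualBound p' w K)
    {f : ℕ → ℝ} (hf : ∀ k, 0 ≤ f k) (hfLp : MemLp p' w f) :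
    (∀ k, 0 ≤ dualOp w f k) ∧ MemLp p' w (dualOp w f) ∧
      lpNormW p' w (dualOp w f) ≤ K * lpNormW p' w f ∧
      (∀ a b n : ℕ, 1 ≤ a → a ≤ n → n ≤ b →
        intervalAvg (fun k => w k * f k) a b ≤ w n * dualOp w f n) := by
  have hq := conj_exp hp hp'
  have hp'1 : 1 < p' := hq.symm.lt
  set G := K * lpNormW p' w f with hG
  have hG0 : 0 ≤ G := mul_nonneg hK (lpNormW_nonneg hw f)
  have hBnorm : ∀ B, lpNormW p' w (dualOp w (trunc f B)) ≤ G := by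
    intro B
    calc lpNormW p' w (dualOp w (trunc f B)) ≤ K * lpNormW p' w (trunc f B) :=
        hM _ (trunc_nonneg hf B) (memLp_trunc hw hp hp' hf hfLp B)
      _ ≤ G := by
          rw [hG]
          refine mul_le_mul_of_nonneg_left (lpNormW_mono hp hp' hw (fun k _ => ?_) hfLp) hK
          rw [abs_of_nonneg (trunc_nonneg hf B k), abs_of_nonneg (hf k)]
          exact trunc_le hf B k
  have hBpoint : ∀ B n, 1 ≤ n →
      maxOp (fun k => w k * trunc f B k) n ≤ G * w n ^ (1/p) := by
    intro B n hn
    have hmem := memLp_dual_trunc hp hp' hw hwAp hf B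
    have h1 : w n * |dualOp w (trunc f B) n| ^ p' ≤ G ^ p' := by
      refine le_trans (pointwise_le hp hp' hw hmem hn) ?_
      exact Real.rpow_le_rpow (lpNormW_nonneg hw _) (hBnorm B) hq.symm.nonneg
    have hwn := hw n hn
    have hdual0 : 0 ≤ dualOp w (trunc f B) n := dualOp_nonneg hw (trunc_nonneg hf B) n
    rw [abs_of_nonneg hdual0] at h1
    have hneg : -(1/p') * p' = -1 := by
      field_simp
    have hd : dualOp w (trunc f B) n ≤ G * w n ^ (-(1/p')) := by
      refine rpow_le_of_pow_le hdual0 (by positivity) hp'1 ?_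
      have h2 : dualOp w (trunc f B) n ^ p' ≤ G ^ p' / w n := by
        rw [le_div_iff₀ hwn]
        calc dualOp w (trunc f B) n ^ p' * w n = w n * dualOp w (trunc f B) n ^ p' := by ring
          _ ≤ G ^ p' := h1
      calc dualOp w (trunc f B) n ^ p' ≤ G ^ p' / w n := h2
        _ = (G * w n ^ (-(1/p'))) ^ p' := by
            rw [Real.mul_rpow hG0 (Real.rpow_nonneg hwn.le _), ← Real.rpow_mul hwn.le,
              hneg, Real.rpow_neg_one, div_eq_mul_inv]
    have hmax : maxOp (fun k => w k * trunc f B k) n = w n * dualOp w (trunc f B) n := by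
      rw [dualOp, mul_comm, div_mul_cancel₀ _ hwn.ne']
    have hpow : w n * w n ^ (-(1/p')) = w n ^ (1/p) := by
      have h := Real.rpow_add hwn 1 (-(1/p'))
      rw [Real.rpow_one] at h
      rw [← h]
      congr 1
      have h2 := hq.inv_add_inv_eq_one
      rw [one_div, one_div]
      linarith
    calc maxOp (fun k => w k * trunc f B k) n = w n * dualOp w (trunc f B) n := hmax
      _ ≤ w n * (G * w n ^ (-(1/p'))) := mul_le_mul_of_nonneg_left hd hwn.le
      _ = G * (w n * w n ^ (-(1/p'))) := by ring
      _ = G * w n ^ (1/p) := by rw [hpow]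
  have havgeq : ∀ a b : ℕ, intervalAvg (fun k => w k * f k) a b =
      intervalAvg (fun k => w k * trunc f b k) a b := by
    intro a b
    unfold intervalAvg
    have heq : ∀ k ∈ Finset.Icc a b, w k * f k = w k * trunc f b k := fun k hk => by
      rw [trunc_eq_on (Finset.mem_Icc.mp hk).2]
    rw [Finset.sum_congr rfl heq]
  have havg : ∀ a b n : ℕ, 1 ≤ a → a ≤ n → n ≤ b →
      intervalAvg (fun k => w k * f k) a b ≤ G * w n ^ (1/p) := by
    intro a b n ha han hnb
    rw [havgeq a b]
    calc intervalAvg (fun k => w k * trunc f b k) a b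
        ≤ maxOp (fun k => w k * trunc f b k) n :=
          le_maxOp (bddAbove_trunc hw hf b n) ha han hnb
      _ ≤ G * w n ^ (1/p) := hBpoint b n (le_trans ha han)
  have hbdd : ∀ n, 1 ≤ n → BddAbove {x : ℝ | ∃ a b : ℕ, 1 ≤ a ∧ a ≤ n ∧ n ≤ b ∧
      x = intervalAvg (fun k => w k * f k) a b} := by
    intro n hn
    refine ⟨G * w n ^ (1/p), ?_⟩
    rintro x ⟨a, b, ha, han, hnb, rfl⟩
    exact havg a b n ha han hnb
  have clause4 : ∀ a b n : ℕ, 1 ≤ a → a ≤ n → n ≤ b →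
      intervalAvg (fun k => w k * f k) a b ≤ w n * dualOp w f n := by
    intro a b n ha han hnb
    have hn : 1 ≤ n := le_trans ha han
    have h1 : intervalAvg (fun k => w k * f k) a b ≤ maxOp (fun k => w k * f k) n :=
      le_maxOp (hbdd n hn) ha han hnb
    have h2 : maxOp (fun k => w k * f k) n = w n * dualOp w f n := by
      rw [dualOp, mul_comm, div_mul_cancel₀ _ (hw n hn).ne']
    rw [← h2]
    exact h1
  -- monotone limits
  have hmono : ∀ n, 1 ≤ n → Monotone (fun B => maxOp (fun k => w k * trunc f B k) n) := by
    intro n hn B B' hBB'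
    refine maxOp_le hn fun a b ha han hnb => ?_
    calc intervalAvg (fun k => w k * trunc f B k) a b
        ≤ intervalAvg (fun k => w k * trunc f B' k) a b :=
          intervalAvg_mono fun k hk _ =>
            mul_le_mul_of_nonneg_left (trunc_mono hf hBB' k) (hw k (le_trans ha hk)).le
      _ ≤ maxOp (fun k => w k * trunc f B' k) n :=
          le_maxOp (bddAbove_trunc hw hf B' n) ha han hnb
  have hub : ∀ n, 1 ≤ n → ∀ B, maxOp (fun k => w k * trunc f B k) n ≤
      maxOp (fun k => w k * f k) n := by
    intro n hn B
    refine maxOp_le hn fun a b ha han hnb => ?_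
    calc intervalAvg (fun k => w k * trunc f B k) a b
        ≤ intervalAvg (fun k => w k * f k) a b :=
          intervalAvg_mono fun k hk _ =>
            mul_le_mul_of_nonneg_left (trunc_le hf B k) (hw k (le_trans ha hk)).le
      _ ≤ maxOp (fun k => w k * f k) n := le_maxOp (hbdd n hn) ha han hnb
  have hlim : ∀ n, 1 ≤ n → Tendsto (fun B => maxOp (fun k => w k * trunc f B k) n) atTop
      (𝓝 (maxOp (fun k => w k * f k) n)) := by
    intro n hn
    have hbddr : BddAbove (Set.range fun B => maxOp (fun k => w k * trunc f B k) n) := by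
      refine ⟨maxOp (fun k => w k * f k) n, ?_⟩
      rintro x ⟨B, rfl⟩
      exact hub n hn B
    have htend := tendsto_atTop_ciSup (hmono n hn) hbddr
    have hsup : ⨆ B, maxOp (fun k => w k * trunc f B k) n =
        maxOp (fun k => w k * f k) n := by
      apply le_antisymm
      · exact ciSup_le (hub n hn)
      · refine maxOp_le hn fun a b ha han hnb => ?_
        rw [havgeq a b]
        calc intervalAvg (fun k => w k * trunc f b k) a b
            ≤ maxOp (fun k => w k * trunc f b k) n :=
              le_maxOp (bddAbove_trunc hw hf b n) ha han hnb
          _ ≤ ⨆ B, maxOp (fun k => w k * trunc f B k) n := le_ciSup hbddr b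
    rw [← hsup]
    exact htend
  -- partial sum bound
  have hpartial : ∀ N : ℕ, ∑ k ∈ Finset.range N, w (k+1) * |dualOp w f (k+1)| ^ p' ≤ G ^ p' := by
    intro N
    have htr : ∀ B, ∑ k ∈ Finset.range N, w (k+1) * |dualOp w (trunc f B) (k+1)| ^ p' ≤ G ^ p' := by
      intro B
      calc ∑ k ∈ Finset.range N, w (k+1) * |dualOp w (trunc f B) (k+1)| ^ p'
          ≤ ∑' k, w (k+1) * |dualOp w (trunc f B) (k+1)| ^ p' :=
            Summable.sum_le_tsum _ (fun k _ => lpTerm_nonneg hw _ k)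
              (memLp_dual_trunc hp hp' hw hwAp hf B)
        _ = (lpNormW p' w (dualOp w (trunc f B))) ^ p' := tsum_eq_norm_rpow hp hp' hw _
        _ ≤ G ^ p' := Real.rpow_le_rpow (lpNormW_nonneg hw _) (hBnorm B) hq.symm.nonneg
    have hlimsum : Tendsto
        (fun B => ∑ k ∈ Finset.range N, w (k+1) * |dualOp w (trunc f B) (k+1)| ^ p')
        atTop (𝓝 (∑ k ∈ Finset.range N, w (k+1) * |dualOp w f (k+1)| ^ p')) := by
      refine tendsto_finset_sum _ fun k _ => ?_
      have hk1 : 1 ≤ k + 1 := by omega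
      have hbase := (hlim (k+1) hk1).div_const (w (k+1))
      have hcont : ContinuousAt (fun x : ℝ => w (k+1) * |x| ^ p')
          (maxOp (fun j => w j * f j) (k+1) / w (k+1)) := by
        refine ContinuousAt.mul continuousAt_const ?_
        exact (Real.continuousAt_rpow_const _ _ (Or.inr hq.symm.nonneg)).comp
          continuous_abs.continuousAt
      have := hcont.tendsto.comp hbase
      exact this
    exact le_of_tendsto hlimsum (Filter.Eventually.of_forall htr)
  have hmemLp : MemLp p' w (dualOp w f) :=
    summable_of_sum_range_le (fun k => lpTerm_nonneg hw _ k) hpartial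
  have hnorm : lpNormW p' w (dualOp w f) ≤ K * lpNormW p' w f := by
    rw [← hG, lpNormW]
    have htsum : ∑' k, w (k+1) * |dualOp w f (k+1)| ^ p' ≤ G ^ p' :=
      Real.tsum_le_of_sum_range_le (fun k => lpTerm_nonneg hw _ k) hpartial
    calc (∑' k, w (k+1) * |dualOp w f (k+1)| ^ p') ^ (1/p')
        ≤ (G ^ p') ^ (1/p') :=
          Real.rpow_le_rpow (tsum_nonneg (lpTerm_nonneg hw _)) htsum hq.symm.one_div_nonneg
      _ = G := by rw [one_div, Real.rpow_rpow_inv hG0 hq.symm.ne_zero]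
  exact ⟨dualOp_nonneg hw hf, hmemLp, hnorm, clause4⟩


lemma point_bound (hp : 1 < p) (hp' : p' = p / (p - 1)) (hw : ∀ k, 1 ≤ k → 0 < w k)
    {f : ℕ → ℝ} (hf : ∀ k, 0 ≤ f k) (hfLp : MemLp p' w f)
    {n : ℕ} (hn : 1 ≤ n) {N : ℝ} (hN0 : 0 ≤ N) (hNle : lpNormW p' w f ≤ N) :
    f n ≤ N * w n ^ (-(1/p')) := by
  have hq := conj_exp hp hp'
  have hwn := hw n hn
  have hb := pointwise_le hp hp' hw hfLp hn
  rw [abs_of_nonneg (hf n)] at hb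
  have h1 : w n * f n ^ p' ≤ N ^ p' :=
    le_trans hb (Real.rpow_le_rpow (lpNormW_nonneg hw f) hNle hq.symm.nonneg)
  have hneg : -(1/p') * p' = -1 := by
    rw [neg_mul, one_div, inv_mul_cancel₀ hq.symm.ne_zero]
  refine rpow_le_of_pow_le (hf n) (mul_nonneg hN0 (Real.rpow_nonneg hwn.le _))
    hq.symm.lt ?_
  rw [Real.mul_rpow hN0 (Real.rpow_nonneg hwn.le _), ← Real.rpow_mul hwn.le, hneg,
    Real.rpow_neg_one, ← div_eq_mul_inv, le_div_iff₀ hwn]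
  calc f n ^ p' * w n = w n * f n ^ p' := by ring
    _ ≤ N ^ p' := h1

end Main
end RdF

/-- Properties of the discrete dual Rubio de Francia algorithm `N'`. -/
theorem dual_rdf_algorithm (p p' : ℝ) (hp : 1 < p) (hp' : p' = p / (p - 1))
    (w : ℕ → ℝ) (hw : ∀ k, 1 ≤ k → 0 < w k) (hwAp : MemAp p w)
    (hM : IsDualBound p' w (dualOpNorm p' w)) (hMpos : 0 < dualOpNorm p' w)
    (h : ℕ → ℝ) (hh0 : ∀ k, 0 ≤ h k) (hhLp : MemLp p' w h)
    (hne : ∃ k, 1 ≤ k ∧ h k ≠ 0) :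
    (∀ n, 1 ≤ n → h n ≤ rdfNdual p' w h n) ∧
      lpNormW p' w (rdfNdual p' w h) ≤ 2 * lpNormW p' w h ∧
      MemA1 (fun k => rdfNdual p' w h k * w k) ∧
      a1Norm (fun k => rdfNdual p' w h k * w k) ≤ 2 * dualOpNorm p' w := by
  have hq := RdF.conj_exp hp hp'
  set K := dualOpNorm p' w with hKdef
  have hK0 : 0 ≤ K := hMpos.le
  set L := lpNormW p' w h with hL
  have hL0 : 0 ≤ L := RdF.lpNormW_nonneg hw h
  set g : ℕ → ℕ → ℝ := fun s => (dualOp w)^[s] h with hg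
  have hg0 : g 0 = h := rfl
  have hgsucc : ∀ s, g (s+1) = dualOp w (g s) := fun s =>
    Function.iterate_succ_apply' (dualOp w) s h
  -- properties of the iterates
  have hiter : ∀ s, (∀ k, 0 ≤ g s k) ∧ MemLp p' w (g s) ∧
      lpNormW p' w (g s) ≤ K ^ s * L := by
    intro s
    induction s with
    | zero =>
      refine ⟨by rw [hg0]; exact hh0, by rw [hg0]; exact hhLp, ?_⟩
      rw [hg0, pow_zero, one_mul]
    | succ s ih =>
      obtain ⟨h1, h2, h3⟩ := ih
      obtain ⟨c1, c2, c3, _⟩ := RdF.stepC hp hp' hw hwAp hK0 hM h1 h2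
      refine ⟨by rw [hgsucc s]; exact c1, by rw [hgsucc s]; exact c2, ?_⟩
      rw [hgsucc s]
      calc lpNormW p' w (dualOp w (g s)) ≤ K * lpNormW p' w (g s) := c3
        _ ≤ K * (K ^ s * L) := mul_le_mul_of_nonneg_left h3 hK0
        _ = K ^ (s+1) * L := by ring
  have hKpow : ∀ s : ℕ, (0:ℝ) < 2 ^ s * K ^ s := fun s => by positivity
  -- pointwise geometric bound for the series terms
  have hterm_le : ∀ n, 1 ≤ n → ∀ s : ℕ,
      g s n / (2 ^ s * K ^ s) ≤ (L * w n ^ (-(1/p'))) * (1/2) ^ s := by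
    intro n hn s
    obtain ⟨h1, h2, h3⟩ := hiter s
    have hpt := RdF.point_bound hp hp' hw h1 h2 hn (by positivity) h3
    rw [div_le_iff₀ (hKpow s)]
    have hKs : (0:ℝ) < K ^ s := by positivity
    calc g s n ≤ K ^ s * L * w n ^ (-(1/p')) := hpt
      _ = (L * w n ^ (-(1/p'))) * (1/2) ^ s * (2 ^ s * K ^ s) := by
          rw [div_pow, one_pow]
          field_simp
  have hterm_nonneg : ∀ n s : ℕ, 0 ≤ g s n / (2 ^ s * K ^ s) := fun n s =>
    div_nonneg ((hiter s).1 n) (hKpow s).le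
  have hsummable_pt : ∀ n, 1 ≤ n → Summable (fun s : ℕ => g s n / (2 ^ s * K ^ s)) := by
    intro n hn
    refine Summable.of_nonneg_of_le (hterm_nonneg n) (hterm_le n hn) ?_
    exact (summable_geometric_of_lt_one (by norm_num) (by norm_num)).mul_left _
  have hrdf : ∀ n, rdfNdual p' w h n = ∑' s : ℕ, g s n / (2 ^ s * K ^ s) := fun n => rfl
  -- (a)
  have parta : ∀ n, 1 ≤ n → h n ≤ rdfNdual p' w h n := by
    intro n hn
    rw [hrdf n]
    have h0 : h n = g 0 n / (2 ^ 0 * K ^ 0) := by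
      rw [hg0, pow_zero, pow_zero, one_mul, div_one]
    rw [h0]
    exact Summable.le_tsum (hsummable_pt n hn) 0 fun s _ => hterm_nonneg n s
  have hrdf_nonneg : ∀ n, 0 ≤ rdfNdual p' w h n := fun n =>
    tsum_nonneg (hterm_nonneg n)
  -- (b): finite Minkowski plus a limit
  set FN : ℕ → ℕ → ℝ := fun S n => ∑ s ∈ Finset.range S, g s n / (2 ^ s * K ^ s) with hFN
  have hts : ∀ s : ℕ, MemLp p' w (fun n => g s n / (2 ^ s * K ^ s)) ∧
      lpNormW p' w (fun n => g s n / (2 ^ s * K ^ s)) ≤ L * (1/2) ^ s := by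
    intro s
    obtain ⟨h1, h2, h3⟩ := hiter s
    obtain ⟨hm, hnorm⟩ := RdF.lpNormW_div_const hp hp' hw (g s) (hKpow s) h2
    refine ⟨hm, ?_⟩
    rw [hnorm]
    rw [div_le_iff₀ (hKpow s)]
    have hKs : (0:ℝ) < K ^ s := by positivity
    calc lpNormW p' w (g s) ≤ K ^ s * L := h3
      _ = L * (1/2) ^ s * (2 ^ s * K ^ s) := by
          rw [div_pow, one_pow]
          field_simp
  have hFNprop : ∀ S : ℕ, MemLp p' w (FN S) ∧
      lpNormW p' w (FN S) ≤ ∑ s ∈ Finset.range S, L * (1/2) ^ s := by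
    intro S
    induction S with
    | zero =>
      constructor
      · rw [MemLp]
        have : ∀ k : ℕ, w (k+1) * |FN 0 (k+1)| ^ p' = 0 := by
          intro k
          rw [hFN]
          simp only [Finset.range_zero, Finset.sum_empty, abs_zero]
          rw [Real.zero_rpow hq.symm.ne_zero, mul_zero]
        simp_rw [this]
        exact summable_zero
      · have : lpNormW p' w (FN 0) = 0 := by
          rw [lpNormW]
          have hz : ∀ k : ℕ, w (k+1) * |FN 0 (k+1)| ^ p' = 0 := by
            intro k
            rw [hFN]
            simp only [Finset.range_zero, Finset.sum_empty, abs_zero]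
            rw [Real.zero_rpow hq.symm.ne_zero, mul_zero]
          simp_rw [hz]
          rw [tsum_zero, Real.zero_rpow hq.symm.one_div_ne_zero]
        rw [this, Finset.range_zero, Finset.sum_empty]
    | succ S ih =>
      obtain ⟨hm1, hn1⟩ := ih
      obtain ⟨hm2, hn2⟩ := hts S
      have hFNsucc : FN (S+1) = fun n => FN S n + g S n / (2 ^ S * K ^ S) := by
        funext n
        rw [hFN]
        exact Finset.sum_range_succ _ S
      have hFN_nonneg : ∀ S' k, 0 ≤ FN S' k := fun S' k =>
        Finset.sum_nonneg fun s _ => hterm_nonneg k s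
      obtain ⟨hma, hna⟩ := RdF.lpNormW_add hp hp' hw (hFN_nonneg S)
        (fun k => hterm_nonneg k S) hm1 hm2
      rw [hFNsucc]
      refine ⟨hma, ?_⟩
      calc lpNormW p' w (fun k => FN S k + g S k / (2 ^ S * K ^ S))
          ≤ lpNormW p' w (FN S) + lpNormW p' w (fun n => g S n / (2 ^ S * K ^ S)) := hna
        _ ≤ (∑ s ∈ Finset.range S, L * (1/2) ^ s) + L * (1/2) ^ S :=
            add_le_add hn1 hn2
        _ = ∑ s ∈ Finset.range (S+1), L * (1/2) ^ s := (Finset.sum_range_succ _ S).symm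
  have hFNnorm : ∀ S : ℕ, lpNormW p' w (FN S) ≤ 2 * L := by
    intro S
    calc lpNormW p' w (FN S) ≤ ∑ s ∈ Finset.range S, L * (1/2) ^ s := (hFNprop S).2
      _ = L * ∑ s ∈ Finset.range S, (1/2) ^ s := by rw [Finset.mul_sum]
      _ ≤ L * 2 := mul_le_mul_of_nonneg_left (sum_geometric_two_le S) hL0
      _ = 2 * L := mul_comm _ _
  have partb : lpNormW p' w (rdfNdual p' w h) ≤ 2 * L := by
    have hpartial : ∀ N : ℕ,
        ∑ k ∈ Finset.range N, w (k+1) * |rdfNdual p' w h (k+1)| ^ p' ≤ (2*L) ^ p' := by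
      intro N
      have hbound : ∀ S : ℕ,
          ∑ k ∈ Finset.range N, w (k+1) * |FN S (k+1)| ^ p' ≤ (2*L) ^ p' := by
        intro S
        calc ∑ k ∈ Finset.range N, w (k+1) * |FN S (k+1)| ^ p'
            ≤ ∑' k, w (k+1) * |FN S (k+1)| ^ p' :=
              Summable.sum_le_tsum _ (fun k _ => RdF.lpTerm_nonneg hw _ k) (hFNprop S).1
          _ = (lpNormW p' w (FN S)) ^ p' := RdF.tsum_eq_norm_rpow hp hp' hw _
          _ ≤ (2*L) ^ p' := Real.rpow_le_rpow (RdF.lpNormW_nonneg hw _) (hFNnorm S)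
              hq.symm.nonneg
      have hlimsum : Tendsto
          (fun S => ∑ k ∈ Finset.range N, w (k+1) * |FN S (k+1)| ^ p') atTop
          (𝓝 (∑ k ∈ Finset.range N, w (k+1) * |rdfNdual p' w h (k+1)| ^ p')) := by
        refine tendsto_finset_sum _ fun k _ => ?_
        have hk1 : (1:ℕ) ≤ k + 1 := by omega
        have hbase : Tendsto (fun S => FN S (k+1)) atTop (𝓝 (rdfNdual p' w h (k+1))) := by
          rw [hrdf (k+1)]
          exact (hsummable_pt (k+1) hk1).hasSum.tendsto_sum_nat
        have hcont : ContinuousAt (fun x : ℝ => w (k+1) * |x| ^ p')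
            (rdfNdual p' w h (k+1)) := by
          refine ContinuousAt.mul continuousAt_const ?_
          exact (Real.continuousAt_rpow_const _ _ (Or.inr hq.symm.nonneg)).comp
            continuous_abs.continuousAt
        exact hcont.tendsto.comp hbase
      exact le_of_tendsto hlimsum (Filter.Eventually.of_forall hbound)
    rw [lpNormW]
    have htsum : ∑' k, w (k+1) * |rdfNdual p' w h (k+1)| ^ p' ≤ (2*L) ^ p' :=
      Real.tsum_le_of_sum_range_le (fun k => RdF.lpTerm_nonneg hw _ k) hpartial
    calc (∑' k, w (k+1) * |rdfNdual p' w h (k+1)| ^ p') ^ (1/p')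
        ≤ ((2*L) ^ p') ^ (1/p') :=
          Real.rpow_le_rpow (tsum_nonneg (RdF.lpTerm_nonneg hw _)) htsum
            hq.symm.one_div_nonneg
      _ = 2 * L := by
          rw [one_div, Real.rpow_rpow_inv (by positivity) hq.symm.ne_zero]
  -- (c)
  have hA1 : IsA1Bound (fun k => rdfNdual p' w h k * w k) (2 * K) := by
    intro a b n ha han hnb
    have hn : 1 ≤ n := le_trans ha han
    have hwn := hw n hn
    have hsum_k : ∀ k ∈ Finset.Icc a b,
        Summable (fun s : ℕ => w k * g s k / (2 ^ s * K ^ s)) := by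
      intro k hk
      have hk1 : 1 ≤ k := le_trans ha (Finset.mem_Icc.mp hk).1
      refine ((hsummable_pt k hk1).mul_left (w k)).congr fun s => ?_
      rw [mul_div_assoc]
    have hswap : ∑ k ∈ Finset.Icc a b, rdfNdual p' w h k * w k =
        ∑' s : ℕ, ∑ k ∈ Finset.Icc a b, w k * g s k / (2 ^ s * K ^ s) := by
      rw [Summable.tsum_finsetSum hsum_k]
      refine Finset.sum_congr rfl fun k hk => ?_
      rw [hrdf k, ← tsum_mul_right]
      refine tsum_congr fun s => ?_
      rw [div_mul_eq_mul_div, mul_comm (g s k) (w k)]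
    -- the average of each term
    have hcard0 : (0:ℝ) ≤ ((Finset.Icc a b).card : ℝ)⁻¹ := by positivity
    -- step bound for each s
    have hstep : ∀ s : ℕ, intervalAvg (fun k => w k * g s k) a b ≤ w n * g (s+1) n := by
      intro s
      obtain ⟨h1, h2, _⟩ := hiter s
      obtain ⟨_, _, _, c4⟩ := RdF.stepC hp hp' hw hwAp hK0 hM h1 h2
      have := c4 a b n ha han hnb
      rw [hgsucc s]
      exact this
    have havg_nonneg : ∀ s : ℕ, 0 ≤ intervalAvg (fun k => w k * g s k) a b := by
      intro s
      refine RdF.intervalAvg_nonneg fun k hk => ?_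
      by_cases hk1 : 1 ≤ k
      · exact mul_nonneg (hw k hk1).le ((hiter s).1 k)
      · have : k = 0 := by omega
        have ha1 : 1 ≤ a := ha
        omega
    -- summability of the comparison series
    have hshift : Summable (fun s : ℕ => g (s+1) n / (2 ^ (s+1) * K ^ (s+1))) :=
      (summable_nat_add_iff 1).mpr (hsummable_pt n hn)
    have hRHSeq : ∀ s : ℕ, w n * g (s+1) n / (2 ^ s * K ^ s) =
        (2 * K * w n) * (g (s+1) n / (2 ^ (s+1) * K ^ (s+1))) := by
      intro s
      have hKne : K ≠ 0 := hMpos.ne'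
      field_simp
      ring
    have hRHSsum : Summable (fun s : ℕ => w n * g (s+1) n / (2 ^ s * K ^ s)) := by
      refine ((hshift.mul_left (2 * K * w n)).congr fun s => ?_)
      rw [hRHSeq s]
    have hLHSsum : Summable
        (fun s : ℕ => intervalAvg (fun k => w k * g s k) a b / (2 ^ s * K ^ s)) := by
      refine Summable.of_nonneg_of_le
        (fun s => div_nonneg (havg_nonneg s) (hKpow s).le) (fun s => ?_) hRHSsum
      rw [div_le_div_iff_of_pos_right (hKpow s)]
      exact hstep s
    -- assemble
    have havg : intervalAvg (fun k => rdfNdual p' w h k * w k) a b =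
        ∑' s : ℕ, intervalAvg (fun k => w k * g s k) a b / (2 ^ s * K ^ s) := by
      unfold intervalAvg
      rw [hswap, ← tsum_mul_left]
      refine tsum_congr fun s => ?_
      rw [← Finset.sum_div, ← mul_div_assoc]
    rw [havg]
    have htail : ∑' s : ℕ, g (s+1) n / (2 ^ (s+1) * K ^ (s+1)) ≤ rdfNdual p' w h n := by
      have hzero := Summable.tsum_eq_zero_add (hsummable_pt n hn)
      rw [hrdf n, hzero]
      have ht0 : 0 ≤ g 0 n / (2 ^ 0 * K ^ 0) := hterm_nonneg n 0
      linarith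
    calc ∑' s : ℕ, intervalAvg (fun k => w k * g s k) a b / (2 ^ s * K ^ s)
        ≤ ∑' s : ℕ, w n * g (s+1) n / (2 ^ s * K ^ s) := by
          refine Summable.tsum_le_tsum (fun s => ?_) hLHSsum hRHSsum
          rw [div_le_div_iff_of_pos_right (hKpow s)]
          exact hstep s
      _ = (2 * K * w n) * ∑' s : ℕ, g (s+1) n / (2 ^ (s+1) * K ^ (s+1)) := by
          rw [← tsum_mul_left]
          exact tsum_congr fun s => hRHSeq s
      _ ≤ (2 * K * w n) * rdfNdual p' w h n :=
          mul_le_mul_of_nonneg_left htail (by positivity)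
      _ = 2 * K * (rdfNdual p' w h n * w n) := by ring
  refine ⟨parta, partb, ⟨2 * K, hA1⟩, ?_⟩
  -- a1Norm bound
  obtain ⟨k0, hk01, hk0ne⟩ := hne
  have hk0pos : 0 < h k0 := (hh0 k0).lt_of_ne (Ne.symm hk0ne)
  have hWpos : 0 < rdfNdual p' w h k0 * w k0 :=
    mul_pos (lt_of_lt_of_le hk0pos (parta k0 hk01)) (hw k0 hk01)
  have havg_self : intervalAvg (fun k => rdfNdual p' w h k * w k) k0 k0 =
      rdfNdual p' w h k0 * w k0 := by
    unfold intervalAvg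
    rw [Finset.Icc_self, Finset.sum_singleton, Finset.card_singleton]
    norm_num
  refine csInf_le ⟨0, fun C hC => ?_⟩ hA1
  have h1 := hC k0 k0 k0 hk01 le_rfl le_rfl
  rw [havg_self] at h1
  have h2 : 1 ≤ C := (le_mul_iff_one_le_left hWpos).mp h1
  linarith
end
end

section
/- The discrete inequality ∑_{k=1}^{N} (1/k²)(∑_{s=1}^{k} v(s))^{β} ≤ β^{β} ∑_{k=1}^{N} k^{α−1} v(k)^{β} (the direct discretization of the corresponding continuous Hardy-type inequality with β − α = 1) fails in general: for N = 4, β = 6/5, α = 1/5 and the sequence v(1) = 100, v(2) = v(3) = v(4) = 1, one has ∑_{k=1}^{4} (1/k²)(∑_{s=1}^{k} v(s))^{6/5} > (6/5)^{6/5} · ∑_{k=1}^{4} k^{−4/5} v(k)^{6/5}. -/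
open Finset Real Filter

noncomputable section

lemma pow65_le {a b : ℝ} (ha : 0 ≤ a) (hb : 0 ≤ b) (h : a ^ 6 ≤ b ^ 5) :
    a ^ (6 / 5 : ℝ) ≤ b := by
  have h1 : a ^ (6 / 5 : ℝ) = (a ^ 6) ^ ((1 : ℝ) / 5) := by
    rw [← Real.rpow_natCast a 6, ← Real.rpow_mul ha]; norm_num
  have h2 : b = (b ^ 5) ^ ((1 : ℝ) / 5) := by
    rw [← Real.rpow_natCast b 5, ← Real.rpow_mul hb]; norm_num
  rw [h1, h2]
  exact Real.rpow_le_rpow (by positivity) h (by norm_num)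

lemma le_pow65 {a b : ℝ} (ha : 0 ≤ a) (hb : 0 ≤ b) (h : b ^ 5 ≤ a ^ 6) :
    b ≤ a ^ (6 / 5 : ℝ) := by
  have h1 : a ^ (6 / 5 : ℝ) = (a ^ 6) ^ ((1 : ℝ) / 5) := by
    rw [← Real.rpow_natCast a 6, ← Real.rpow_mul ha]; norm_num
  have h2 : b = (b ^ 5) ^ ((1 : ℝ) / 5) := by
    rw [← Real.rpow_natCast b 5, ← Real.rpow_mul hb]; norm_num
  rw [h1, h2]
  exact Real.rpow_le_rpow (by positivity) h (by norm_num)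

lemma pow_neg45_le {a b : ℝ} (ha : 0 < a) (hb : 0 < b) (h : 1 ≤ a ^ 4 * b ^ 5) :
    a ^ (-(4 / 5) : ℝ) ≤ b := by
  have h5 : ((5 : ℕ) : ℝ) = 5 := by norm_num
  have key : (a ^ (-(4 / 5) : ℝ)) ^ (5 : ℕ) ≤ b ^ (5 : ℕ) := by
    have e : (a ^ (-(4 / 5) : ℝ)) ^ (5 : ℕ) = (a ^ 4)⁻¹ := by
      rw [← Real.rpow_natCast (a ^ (-(4 / 5) : ℝ)) 5, ← Real.rpow_mul ha.le, h5]
      rw [show (-(4 / 5) : ℝ) * 5 = -((4 : ℕ) : ℝ) by norm_num, Real.rpow_neg ha.le,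
        Real.rpow_natCast]
    rw [e, ← one_div, div_le_iff₀ (by positivity)]
    linarith
  calc a ^ (-(4 / 5) : ℝ)
      = ((a ^ (-(4 / 5) : ℝ)) ^ (5 : ℕ)) ^ ((1 : ℝ) / 5) := by
        rw [← Real.rpow_natCast (a ^ (-(4 / 5) : ℝ)) 5, ← Real.rpow_mul ha.le, h5,
          ← Real.rpow_mul ha.le]
        norm_num
    _ ≤ (b ^ (5 : ℕ)) ^ ((1 : ℝ) / 5) := Real.rpow_le_rpow (by positivity) key (by norm_num)
    _ = b := by
        rw [← Real.rpow_natCast b 5, ← Real.rpow_mul hb.le, h5]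
        norm_num

/-- Counterexample showing the direct discretization of the
continuous Hardy-type inequality fails: with `N = 4`, `β = 6/5`, `α = 1/5` and
`v = (100, 1, 1, 1)`, the left side exceeds `β^β` times the right side. -/
theorem discretization_fails :
    (6 / 5 : ℝ) ^ (6 / 5 : ℝ) *
        ∑ k ∈ Finset.Icc (1 : ℕ) 4,
          (k : ℝ) ^ (-(4 : ℝ) / 5) *
            ((if k = 1 then (100 : ℝ) else 1) ^ (6 / 5 : ℝ)) <
      ∑ k ∈ Finset.Icc (1 : ℕ) 4,
        ((k : ℝ) ^ 2)⁻¹ *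
          (∑ s ∈ Finset.Icc (1 : ℕ) k, (if s = 1 then (100 : ℝ) else 1)) ^ (6 / 5 : ℝ) :=  by
  have hsum : ∀ f : ℕ → ℝ, ∑ k ∈ Finset.Icc (1 : ℕ) 4, f k = f 1 + f 2 + f 3 + f 4 := by
    intro f
    rw [show Finset.Icc (1 : ℕ) 4 = {1, 2, 3, 4} from rfl]
    norm_num [Finset.sum_insert, Finset.mem_insert]
    ring
  rw [hsum, hsum]
  have e2 : ∑ s ∈ Finset.Icc (1 : ℕ) 2, (if s = 1 then (100 : ℝ) else 1) = 101 := by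
    rw [show Finset.Icc (1 : ℕ) 2 = {1, 2} from rfl]; norm_num
  have e3 : ∑ s ∈ Finset.Icc (1 : ℕ) 3, (if s = 1 then (100 : ℝ) else 1) = 102 := by
    rw [show Finset.Icc (1 : ℕ) 3 = {1, 2, 3} from rfl]; norm_num
  have e4 : ∑ s ∈ Finset.Icc (1 : ℕ) 4, (if s = 1 then (100 : ℝ) else 1) = 103 := by
    rw [show Finset.Icc (1 : ℕ) 4 = {1, 2, 3, 4} from rfl]; norm_num
  rw [e2, e3, e4]
  norm_num
  have h100u : (100 : ℝ) ^ (6 / 5 : ℝ) ≤ 251.19 :=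
    pow65_le (by norm_num) (by norm_num) (by norm_num)
  have h100l : (251.18 : ℝ) ≤ (100 : ℝ) ^ (6 / 5 : ℝ) :=
    le_pow65 (by norm_num) (by norm_num) (by norm_num)
  have hc : (6 / 5 : ℝ) ^ (6 / 5 : ℝ) ≤ 1.245 :=
    pow65_le (by norm_num) (by norm_num) (by norm_num)
  have h2 : (2 : ℝ) ^ (-(4 / 5) : ℝ) ≤ 0.575 :=
    pow_neg45_le (by norm_num) (by norm_num) (by norm_num)
  have h3 : (3 : ℝ) ^ (-(4 / 5) : ℝ) ≤ 0.416 :=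
    pow_neg45_le (by norm_num) (by norm_num) (by norm_num)
  have h4 : (4 : ℝ) ^ (-(4 / 5) : ℝ) ≤ 0.330 :=
    pow_neg45_le (by norm_num) (by norm_num) (by norm_num)
  have h101 : (254.2 : ℝ) ≤ (101 : ℝ) ^ (6 / 5 : ℝ) :=
    le_pow65 (by norm_num) (by norm_num) (by norm_num)
  have h102 : (257.2 : ℝ) ≤ (102 : ℝ) ^ (6 / 5 : ℝ) :=
    le_pow65 (by norm_num) (by norm_num) (by norm_num)
  have h103 : (260.2 : ℝ) ≤ (103 : ℝ) ^ (6 / 5 : ℝ) :=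
    le_pow65 (by norm_num) (by norm_num) (by norm_num)
  have hc0 : (0 : ℝ) ≤ (6 / 5 : ℝ) ^ (6 / 5 : ℝ) := Real.rpow_nonneg (by norm_num) _
  have hS : (100 : ℝ) ^ (6 / 5 : ℝ) + (2 : ℝ) ^ (-(4 / 5) : ℝ) + (3 : ℝ) ^ (-(4 / 5) : ℝ) +
      (4 : ℝ) ^ (-(4 / 5) : ℝ) ≤ 252.511 := by linarith
  have hL : (6 / 5 : ℝ) ^ (6 / 5 : ℝ) *
      ((100 : ℝ) ^ (6 / 5 : ℝ) + (2 : ℝ) ^ (-(4 / 5) : ℝ) + (3 : ℝ) ^ (-(4 / 5) : ℝ) +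
        (4 : ℝ) ^ (-(4 / 5) : ℝ)) ≤ 1.245 * 252.511 :=
    mul_le_mul hc hS (by positivity) (by norm_num)
  linarith
end
end
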